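/- arXiv:1701.03263 — 11 statements merged into one kernel-verified Lean document; each statement's English description precedes it below -/
import Mathlib

section
/- If the instance admits a schedule in which every machine has load at most T̄ = (1+ε)T, then MILP(T̄) has an integral feasible solution, i.e., there exist z_{C,t} ∈ ℕ and x_{j,t} ∈ {0,1} satisfying constraints (1)–(4) with R = T̄. -/
/-!
A schedule `σ` of makespan at most `T̄` is read off as an integral MILP solution: `x_{j,t}`
records the type of the machine `σ j`, and `z_{C,t}` counts the machines of type `t` whose big
jobs form the configuration `C`. Constraint (3) then holds with equality, while the
configuration sizes and constraint (4) are bounded by the machine loads, since grouping the jobs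
of a machine by processing time only regroups its load.
-/

open Finset
open scoped Classical ENNReal

noncomputable section

variable {J : Type*} [Fintype J] {K : ℕ}

/-- The set `B_t` of finite big processing-time values occurring for machine type `t`. -/
def bigSet (ε T : ℝ) (p : Fin K → J → ℝ≥0∞) (t : Fin K) : Finset ℝ≥0∞ :=
  (Finset.univ.image (p t)).filter fun v => ENNReal.ofReal (ε ^ 2 * T) < v ∧ v ≠ ⊤

/-- The set `S_t` of small processing-time values occurring for machine type `t`. -/
def smallSet (ε T : ℝ) (p : Fin K → J → ℝ≥0∞) (t : Fin K) : Finset ℝ≥0∞ :=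
  (Finset.univ.image (p t)).filter fun v => v ≤ ENNReal.ofReal (ε ^ 2 * T)

/-- The size of a configuration `C` for the set of big values `B`. -/
def confSize (B : Finset ℝ≥0∞) (C : ℝ≥0∞ → ℕ) : ℝ≥0∞ := ∑ v ∈ B, (C v : ℝ≥0∞) * v

/-- `C` is a configuration for the set of big values `B`: it is supported on `B` and has
size at most `T̄ = (1+ε)T`. -/
def IsConf (ε T : ℝ) (B : Finset ℝ≥0∞) (C : ℝ≥0∞ → ℕ) : Prop :=
  (∀ v ∉ B, C v = 0) ∧ confSize B C ≤ ENNReal.ofReal ((1 + ε) * T)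

/-- Feasibility of the (relaxed) MILP(R): `z` are the configuration variables (supported
on the configurations for each type), `x` the fractional job-assignment variables
(vanishing when the processing time exceeds `T̄ = (1+ε)T`), subject to the constraints
(1)-(4) of the paper. -/
def MILPFeasible (ε T : ℝ) (p : Fin K → J → ℝ≥0∞) (m : Fin K → ℕ) (R : ℝ)
    (z : (ℝ≥0∞ → ℕ) → Fin K → ℝ≥0∞) (x : J → Fin K → ℝ≥0∞) : Prop :=
  (∀ C t, ¬ IsConf ε T (bigSet ε T p t) C → z C t = 0) ∧
  (∀ j t, ENNReal.ofReal ((1 + ε) * T) < p t j → x j t = 0) ∧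
  (∀ t, ∑' C : ℝ≥0∞ → ℕ, z C t = m t) ∧
  (∀ j, ∑ t, x j t = 1) ∧
  (∀ t, ∀ v ∈ bigSet ε T p t,
    ∑ j ∈ Finset.univ.filter (fun j => p t j = v), x j t ≤
      ∑' C : ℝ≥0∞ → ℕ, (C v : ℝ≥0∞) * z C t) ∧
  (∀ t, (∑' C : ℝ≥0∞ → ℕ, confSize (bigSet ε T p t) C * z C t) +
      ∑ v ∈ smallSet ε T p t, v * ∑ j ∈ Finset.univ.filter (fun j => p t j = v), x j t ≤
      (m t : ℝ≥0∞) * ENNReal.ofReal R)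

/-- The machines: `m t` machines of each type `t`. -/
def Machine (m : Fin K → ℕ) : Type := Σ t : Fin K, Fin (m t)

/-- The load of machine `i` under schedule `σ`. -/
def load (p : Fin K → J → ℝ≥0∞) (m : Fin K → ℕ) (σ : J → Machine m) (i : Machine m) :
    ℝ≥0∞ :=
  ∑ j ∈ Finset.univ.filter (fun j => σ j = i), p i.1 j

section Fibers

variable {α β R : Type*}

lemma sum_card_filter_mul_le_sum [Semiring R] [PartialOrder R] [CanonicallyOrderedAdd R]
    [IsOrderedAddMonoid R] (s : Finset α) (f : α → R) (V : Finset R) :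
    ∑ v ∈ V, (#{a ∈ s | f a = v} : R) * v ≤ ∑ a ∈ s, f a := by
  calc ∑ v ∈ V, (#{a ∈ s | f a = v} : R) * v
      = ∑ v ∈ V, ∑ a ∈ s with f a = v, f a := by
        refine Finset.sum_congr rfl fun v _ => ?_
        rw [Finset.sum_congr rfl fun a ha => (Finset.mem_filter.mp ha).2, Finset.sum_const,
          nsmul_eq_mul]
    _ ≤ ∑ a ∈ s, f a := Finset.sum_fiberwise_le_sum_of_sum_fiber_nonneg fun _ _ => zero_le

lemma tsum_mul_card_fiber [Semiring R] [TopologicalSpace R] [Fintype α] (c : α → β)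
    (g : β → R) : ∑' b, g b * #{a | c a = b} = ∑ a, g (c a) := by
  rw [Finset.sum_comp, tsum_eq_sum (s := univ.image c)]
  · simp only [nsmul_eq_mul']
  · intro b hb
    rw [Finset.card_eq_zero.mpr, Nat.cast_zero, mul_zero]
    exact Finset.filter_eq_empty_iff.mpr fun a _ h =>
      hb (h ▸ Finset.mem_image_of_mem c (mem_univ a))

lemma card_filter_fst_eq_sum {ι : Type*} {γ : ι → Type*} [∀ i, Fintype (γ i)]
    (σ : α → Σ i, γ i) (s : Finset α) (i : ι) :
    #{a ∈ s | (σ a).1 = i} = ∑ k : γ i, #{a ∈ s | σ a = ⟨i, k⟩} := by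
  rw [Finset.card_eq_sum_card_fiberwise (f := σ) (t := univ.map (Function.Embedding.sigmaMk i)),
    Finset.sum_map]
  · refine Finset.sum_congr rfl fun k _ => congrArg card ?_
    rw [Finset.filter_filter]
    exact Finset.filter_congr fun a _ => ⟨And.right, fun h => ⟨by rw [h], h⟩⟩
  · intro a ha
    obtain ⟨-, ha⟩ := Finset.mem_filter.mp ha
    rcases h : σ a with ⟨i', k⟩
    rw [h] at ha
    subst ha
    exact Finset.mem_map_of_mem _ (mem_univ k)

end Fibers

section Schedule

variable (ε T : ℝ) (p : Fin K → J → ℝ≥0∞) {m : Fin K → ℕ} (σ : J → Machine m)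

def jobsWithTime (M : Machine m) (v : ℝ≥0∞) : Finset J := {j | p M.1 j = v ∧ σ j = M}

def machineConf (t : Fin K) (i : Fin (m t)) : ℝ≥0∞ → ℕ :=
  fun v => if v ∈ bigSet ε T p t then #(jobsWithTime p σ ⟨t, i⟩ v) else 0

def confCount (C : ℝ≥0∞ → ℕ) (t : Fin K) : ℝ≥0∞ := #{i | machineConf ε T p σ t i = C}

def typeAssignment (j : J) (t : Fin K) : ℝ≥0∞ := if (σ j).1 = t then 1 else 0

lemma sum_card_jobsWithTime_mul_le_load (M : Machine m) (V : Finset ℝ≥0∞) :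
    ∑ v ∈ V, (#(jobsWithTime p σ M v) : ℝ≥0∞) * v ≤ load p m σ M := by
  simpa only [jobsWithTime, load, Finset.filter_filter, and_comm] using
    sum_card_filter_mul_le_sum {j | σ j = M} (p M.1) V

lemma confSize_machineConf (t : Fin K) (i : Fin (m t)) :
    confSize (bigSet ε T p t) (machineConf ε T p σ t i) =
      ∑ v ∈ bigSet ε T p t, (#(jobsWithTime p σ ⟨t, i⟩ v) : ℝ≥0∞) * v :=
  Finset.sum_congr rfl fun v hv => by rw [machineConf, if_pos hv]

lemma tsum_mul_confCount (t : Fin K) (g : (ℝ≥0∞ → ℕ) → ℝ≥0∞) :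
    ∑' C, g C * confCount ε T p σ C t = ∑ i, g (machineConf ε T p σ t i) :=
  tsum_mul_card_fiber _ g

lemma sum_filter_typeAssignment (t : Fin K) (v : ℝ≥0∞) :
    ∑ j with p t j = v, typeAssignment σ j t = ∑ i, (#(jobsWithTime p σ ⟨t, i⟩ v) : ℝ≥0∞) := by
  -- `Machine m` is a plain `def`: `σ` is retyped into the sigma type, and `convert` then matches
  -- equalities stated in `Machine m` with the same equalities stated in the sigma type.
  have key := card_filter_fst_eq_sum (σ : J → Σ t, Fin (m t)) {j | p t j = v} t
  simp only [Finset.filter_filter] at key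
  simp only [typeAssignment, Finset.sum_boole, Finset.filter_filter, jobsWithTime]
  rw [← Nat.cast_sum]
  exact congrArg _ (by convert key; exact Iff.rfl)

lemma sum_filter_typeAssignment_eq_tsum {t : Fin K} {v : ℝ≥0∞} (hv : v ∈ bigSet ε T p t) :
    ∑ j with p t j = v, typeAssignment σ j t =
      ∑' C : ℝ≥0∞ → ℕ, (C v : ℝ≥0∞) * confCount ε T p σ C t := by
  rw [tsum_mul_confCount, sum_filter_typeAssignment]
  exact Finset.sum_congr rfl fun i _ => by rw [machineConf, if_pos hv]

lemma disjoint_bigSet_smallSet (t : Fin K) : Disjoint (bigSet ε T p t) (smallSet ε T p t) := by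
  rw [Finset.disjoint_left]
  intro v hv hv'
  exact (Finset.mem_filter.mp hv').2.not_gt (Finset.mem_filter.mp hv).2.1

variable {ε T p σ}

lemma processingTime_le_load (j : J) : p (σ j).1 j ≤ load p m σ (σ j) :=
  Finset.single_le_sum (f := p (σ j).1) (fun _ _ => zero_le) (by simp)

lemma isConf_machineConf (hσ : ∀ M, load p m σ M ≤ ENNReal.ofReal ((1 + ε) * T)) (t : Fin K)
    (i : Fin (m t)) : IsConf ε T (bigSet ε T p t) (machineConf ε T p σ t i) :=
  ⟨fun _ hv => if_neg hv,
    (confSize_machineConf ε T p σ t i).trans_le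
      ((sum_card_jobsWithTime_mul_le_load p σ _ _).trans (hσ _))⟩

lemma confCount_eq_zero_of_not_isConf (hσ : ∀ M, load p m σ M ≤ ENNReal.ofReal ((1 + ε) * T))
    (C : ℝ≥0∞ → ℕ) (t : Fin K) (hC : ¬ IsConf ε T (bigSet ε T p t) C) :
    confCount ε T p σ C t = 0 := by
  rw [confCount, Nat.cast_eq_zero, Finset.card_eq_zero, Finset.filter_eq_empty_iff]
  rintro i - rfl
  exact hC (isConf_machineConf hσ t i)

lemma typeAssignment_eq_zero_of_lt (hσ : ∀ M, load p m σ M ≤ ENNReal.ofReal ((1 + ε) * T))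
    (j : J) (t : Fin K) (h : ENNReal.ofReal ((1 + ε) * T) < p t j) :
    typeAssignment σ j t = 0 := by
  refine if_neg ?_
  rintro rfl
  exact h.not_ge ((processingTime_le_load j).trans (hσ (σ j)))

lemma tsum_confSize_add_sum_smallSet_le
    (hσ : ∀ M, load p m σ M ≤ ENNReal.ofReal ((1 + ε) * T)) (t : Fin K) :
    (∑' C, confSize (bigSet ε T p t) C * confCount ε T p σ C t) +
        ∑ v ∈ smallSet ε T p t, v * ∑ j with p t j = v, typeAssignment σ j t ≤
      m t * ENNReal.ofReal ((1 + ε) * T) := by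
  rw [tsum_mul_confCount]
  calc ∑ i, confSize (bigSet ε T p t) (machineConf ε T p σ t i) +
        ∑ v ∈ smallSet ε T p t, v * ∑ j with p t j = v, typeAssignment σ j t
      = ∑ i, ∑ v ∈ bigSet ε T p t ∪ smallSet ε T p t,
          (#(jobsWithTime p σ ⟨t, i⟩ v) : ℝ≥0∞) * v := by
        simp only [confSize_machineConf, sum_filter_typeAssignment, Finset.mul_sum,
          Finset.sum_union (disjoint_bigSet_smallSet ε T p t), Finset.sum_add_distrib]
        rw [Finset.sum_comm (s := smallSet ε T p t)]
        simp only [mul_comm]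
    _ ≤ ∑ i : Fin (m t), load p m σ ⟨t, i⟩ :=
        Finset.sum_le_sum fun i _ => sum_card_jobsWithTime_mul_le_load p σ _ _
    _ ≤ ∑ _i : Fin (m t), ENNReal.ofReal ((1 + ε) * T) := Finset.sum_le_sum fun i _ => hσ _
    _ = m t * ENNReal.ofReal ((1 + ε) * T) := by simp

end Schedule

theorem schedule_to_MILP_general (ε T : ℝ)
    (p : Fin K → J → ℝ≥0∞) (m : Fin K → ℕ)
    (hsched : ∃ σ : J → Machine m, ∀ i, load p m σ i ≤ ENNReal.ofReal ((1 + ε) * T)) :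
    ∃ z x, MILPFeasible ε T p m ((1 + ε) * T) z x ∧
      (∀ C t, ∃ n : ℕ, z C t = n) ∧
      (∀ j t, x j t = 0 ∨ x j t = 1) := by
  obtain ⟨σ, hσ⟩ := hsched
  refine ⟨confCount ε T p σ, typeAssignment σ,
    ⟨confCount_eq_zero_of_not_isConf hσ, typeAssignment_eq_zero_of_lt hσ, fun t => ?_, fun j => ?_,
      fun t v hv => (sum_filter_typeAssignment_eq_tsum ε T p σ hv).le,
      tsum_confSize_add_sum_smallSet_le hσ⟩,
    fun C t => ⟨_, rfl⟩, fun j t => ?_⟩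
  · simpa using tsum_mul_confCount ε T p σ t 1
  · simp [typeAssignment]
  · unfold typeAssignment
    split_ifs <;> simp

/-- A schedule with makespan at most `T̄ = (1+ε)T` yields an integral
feasible solution of MILP(T̄). -/
theorem schedule_to_MILP (ε T : ℝ) (hε : 0 < ε) (hε1 : ε ≤ 1) (hT : 0 < T)
    (p : Fin K → J → ℝ≥0∞) (hp : ∀ t j, p t j ≠ 0) (m : Fin K → ℕ)
    (hsched : ∃ σ : J → Machine m, ∀ i, load p m σ i ≤ ENNReal.ofReal ((1 + ε) * T)) :
    ∃ z x, MILPFeasible ε T p m ((1 + ε) * T) z x ∧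
      (∀ C t, ∃ n : ℕ, z C t = n) ∧
      (∀ j t, x j t = 0 ∨ x j t = 1) :=
  schedule_to_MILP_general ε T p m hsched
end
end

section
/- Let R ≥ T̄ = (1+ε)T. If MILP(R) has an integral feasible solution, then the instance admits a schedule with makespan at most R + ε²T. -/
open Finset
open scoped Classical ENNReal

noncomputable section

variable {J : Type*} [Fintype J] {K : ℕ}

/-!
Integrality turns `x` into an assignment of every job to a single machine type `t`, and `z`
into a list `conf` of `m t` configurations for type `t`, one per machine. By constraint (3),
the big jobs of type `t` of each size `v` are at most as many as the slots for `v` in this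
list, so they can be packed so that machine `k` gets at most `conf k v` of them; its big load is
then at most `size (conf k) ≤ T̄ ≤ R`. By constraint (4) the big loads together with all small
jobs of type `t` weigh at most `m t * R`, so some machine always has load at most `R`, and
placing the small jobs there one by one never exceeds `R + ε²T`.
-/

theorem exists_card_filter_le_of_card_le {α ι : Type*} [Fintype ι] [DecidableEq ι] [Nonempty ι]
    (cap : ι → ℕ) (s : Finset α) (h : #s ≤ ∑ i, cap i) :
    ∃ f : α → ι, ∀ i, #{j ∈ s | f j = i} ≤ cap i := by
  induction s using Finset.induction_on with
  | empty => exact ⟨fun _ => Classical.arbitrary ι, by simp⟩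
  | insert a s ha ih =>
    rw [card_insert_of_notMem ha] at h
    obtain ⟨f, hf⟩ := ih (by omega)
    obtain ⟨i₀, -, hi₀⟩ : ∃ i₀ ∈ univ, #{j ∈ s | f j = i₀} < cap i₀ := by
      refine exists_lt_of_sum_lt ?_
      rwa [← card_eq_sum_card_fiberwise (f := f) fun _ _ => mem_univ _, Nat.lt_iff_add_one_le]
    refine ⟨Function.update f a i₀, fun i => ?_⟩
    have hs : {j ∈ s | Function.update f a i₀ j = i} = {j ∈ s | f j = i} :=
      filter_congr fun j hj => by rw [Function.update_of_ne (ne_of_mem_of_not_mem hj ha)]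
    rw [filter_insert, Function.update_self, hs]
    split_ifs with hi
    · subst hi
      rw [card_insert_of_notMem fun h => ha (mem_filter.1 h).1]
      exact hi₀
    · exact hf i

theorem exists_card_filter_and_le {α β ι : Type*} [DecidableEq β] [Fintype ι] [DecidableEq ι]
    [Nonempty ι] (q : α → β) (cap : ι → β → ℕ) (s : Finset α)
    (h : ∀ v, #{j ∈ s | q j = v} ≤ ∑ i, cap i v) :
    ∃ f : α → ι, ∀ i v, #{j ∈ s | f j = i ∧ q j = v} ≤ cap i v := by
  choose f hf using fun v => exists_card_filter_le_of_card_le (cap · v) _ (h v)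
  refine ⟨fun j => f (q j) j, fun i v => ?_⟩
  convert hf v i using 2
  rw [filter_filter]
  exact filter_congr fun j _ => by
    rw [and_comm]
    exact and_congr_right fun hv => by subst hv; rfl

theorem exists_add_sum_filter_le {α ι : Type*} [Fintype ι] [DecidableEq ι] [Nonempty ι]
    (q : α → ℝ≥0∞) {b c : ℝ≥0∞} (S : Finset α) (hq : ∀ j ∈ S, q j ≤ c) (ℓ : ι → ℝ≥0∞)
    (hℓ : ∀ i, ℓ i ≤ b + c)
    (hsum : ∑ i, ℓ i + ∑ j ∈ S, q j ≤ Fintype.card ι * b) :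
    ∃ f : α → ι, ∀ i, ℓ i + ∑ j ∈ S with f j = i, q j ≤ b + c := by
  induction S using Finset.induction_on generalizing ℓ with
  | empty => exact ⟨fun _ => Classical.arbitrary ι, by simpa using hℓ⟩
  | insert a S ha ih =>
    obtain ⟨i₀, -, hi₀⟩ : ∃ i₀ ∈ univ, ℓ i₀ ≤ b := by
      by_contra! hfull
      have := ENNReal.sum_lt_sum_of_nonempty univ_nonempty hfull
      simp only [sum_const, card_univ, nsmul_eq_mul] at this
      exact (this.trans_le le_self_add).not_ge hsum
    rw [sum_insert ha] at hsum
    obtain ⟨f, hf⟩ := ih (fun j hj => hq j (mem_insert_of_mem hj)) (ℓ + Pi.single i₀ (q a))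
      (fun i => by
        rcases eq_or_ne i i₀ with rfl | hi
        · simpa using add_le_add hi₀ (hq a (mem_insert_self a S))
        · simpa [hi] using hℓ i)
      (by
        simp only [Pi.add_apply]
        rwa [sum_add_distrib, sum_pi_single', if_pos (mem_univ _), add_assoc])
    refine ⟨Function.update f a i₀, fun i => ?_⟩
    have hS : {j ∈ S | Function.update f a i₀ j = i} = {j ∈ S | f j = i} :=
      filter_congr fun j hj => by rw [Function.update_of_ne (ne_of_mem_of_not_mem hj ha)]
    have := hf i
    rw [filter_insert, Function.update_self, hS]
    split_ifs with hi
    · subst hi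
      rw [Pi.add_apply, Pi.single_eq_same] at this
      rwa [sum_insert fun h => ha (mem_filter.1 h).1, ← add_assoc]
    · simpa [Pi.single_apply, Ne.symm hi] using this

theorem exists_fin_tuple_of_tsum_natCast_eq {ι : Type*} (g : ι → ℕ) {n : ℕ}
    (h : ∑' i, (g i : ℝ≥0∞) = n) :
    ∃ e : Fin n → ι, (∀ k, g (e k) ≠ 0) ∧ ∀ F : ι → ℝ≥0∞, ∑' i, F i * g i = ∑ k, F (e k) := by
  have hfin : (Function.support g).Finite :=
    (ENNReal.finite_const_le_of_tsum_ne_top (h ▸ ENNReal.natCast_ne_top n) one_ne_zero).subset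
      fun i hi => by simpa [Nat.one_le_iff_ne_zero] using hi
  set s := hfin.toFinset
  have htsum (F : ι → ℝ≥0∞) : ∑' i, F i * g i = ∑ i ∈ s, F i * g i :=
    tsum_eq_sum fun i hi => by simp_all [s]
  have hcard : Fintype.card (Σ i : s, Fin (g i)) = n := by
    have := htsum 1
    simp only [Pi.one_apply, one_mul] at this
    rw [this] at h
    simp only [Fintype.card_sigma, Fintype.card_fin]
    exact_mod_cast (sum_coe_sort s g).trans (by exact_mod_cast h)
  let e := (Fintype.equivFinOfCardEq hcard).symm
  refine ⟨fun k => (e k).1, fun k => (hfin.mem_toFinset.1 (e k).1.2), fun F => ?_⟩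
  rw [htsum, e.sum_comp (fun σ => F σ.1), Fintype.sum_sigma, ← sum_coe_sort s]
  simp [mul_comm]

theorem sum_eq_sum_card_filter_mul {α M : Type*} [NonAssocSemiring M] [DecidableEq M]
    {s : Finset α} {V : Finset M} {q : α → M} (h : ∀ j ∈ s, q j ∈ V) :
    ∑ j ∈ s, q j = ∑ v ∈ V, #{j ∈ s | q j = v} * v := by
  rw [← sum_fiberwise_of_maps_to h]
  refine sum_congr rfl fun v _ => ?_
  rw [sum_congr rfl fun j hj => (mem_filter.1 hj).2, sum_const, nsmul_eq_mul]

theorem sum_filter_union_piecewise {α ι M : Type*} [DecidableEq ι] [AddCommMonoid M]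
    {s t : Finset α} (hst : Disjoint s t) (f g : α → ι) (q : α → M) (i : ι) :
    ∑ j ∈ s ∪ t with s.piecewise f g j = i, q j =
      ∑ j ∈ s with f j = i, q j + ∑ j ∈ t with g j = i, q j := by
  rw [filter_union, sum_union (disjoint_filter_filter hst)]
  congr 2 <;> refine filter_congr fun j hj => ?_
  · rw [piecewise_eq_of_mem _ _ _ hj]
  · rw [piecewise_eq_of_notMem _ _ _ (disjoint_right.1 hst hj)]

theorem sum_le_confSize {α : Type*} {s : Finset α} {q : α → ℝ≥0∞} {B : Finset ℝ≥0∞}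
    (hs : ∀ j ∈ s, q j ∈ B) {C : ℝ≥0∞ → ℕ} (hC : ∀ v ∈ B, #{j ∈ s | q j = v} ≤ C v) :
    ∑ j ∈ s, q j ≤ confSize B C := by
  rw [sum_eq_sum_card_filter_mul hs, confSize]
  gcongr with v hv
  exact_mod_cast hC v hv

section MILP

variable {ε T R : ℝ} {p : Fin K → J → ℝ≥0∞} {m : Fin K → ℕ}
  {z : (ℝ≥0∞ → ℕ) → Fin K → ℝ≥0∞} {x : J → Fin K → ℝ≥0∞} {t : Fin K} {j : J}

def bigJobs (ε T : ℝ) (p : Fin K → J → ℝ≥0∞) (x : J → Fin K → ℝ≥0∞) (t : Fin K) : Finset J :=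
  {j | x j t ≠ 0 ∧ ENNReal.ofReal (ε ^ 2 * T) < p t j}

def smallJobs (ε T : ℝ) (p : Fin K → J → ℝ≥0∞) (x : J → Fin K → ℝ≥0∞) (t : Fin K) :
    Finset J :=
  {j | x j t ≠ 0 ∧ p t j ≤ ENNReal.ofReal (ε ^ 2 * T)}

theorem disjoint_bigJobs_smallJobs : Disjoint (bigJobs ε T p x t) (smallJobs ε T p x t) :=
  disjoint_filter.2 fun _ _ hbig hsmall => hsmall.2.not_gt hbig.2

theorem bigJobs_union_smallJobs :
    bigJobs ε T p x t ∪ smallJobs ε T p x t = ({j | x j t ≠ 0} : Finset J) := by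
  ext j
  simp only [bigJobs, smallJobs, mem_union, mem_filter, mem_univ, true_and, ← and_or_left,
    lt_or_ge, and_true]

theorem mem_smallSet_of_mem_smallJobs (hj : j ∈ smallJobs ε T p x t) :
    p t j ∈ smallSet ε T p t :=
  mem_filter.2 ⟨mem_image_of_mem _ (mem_univ j), (mem_filter.1 hj).2.2⟩

theorem card_filter_le_sum (hx : ∀ j t, ∃ n : ℕ, x j t = n) {A : Finset J}
    (hA : ∀ j ∈ A, x j t ≠ 0) (v : ℝ≥0∞) :
    (#{j ∈ A | p t j = v} : ℝ≥0∞) ≤ ∑ j with p t j = v, x j t := by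
  have hone : ∀ j ∈ A.filter (p t · = v), 1 ≤ x j t := fun j hj => by
    obtain ⟨n, hn⟩ := hx j t
    have := hA j (mem_filter.1 hj).1
    rw [hn] at this ⊢
    exact Nat.one_le_cast.2 (Nat.one_le_iff_ne_zero.2 (by exact_mod_cast this))
  calc (#{j ∈ A | p t j = v} : ℝ≥0∞) ≤ ∑ j ∈ A.filter (p t · = v), x j t := by
        simpa using card_nsmul_le_sum _ _ 1 hone
    _ ≤ ∑ j with p t j = v, x j t :=
        sum_le_sum_of_subset (filter_subset_filter _ (subset_univ A))

namespace MILPFeasible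

theorem le_of_ne_zero (h : MILPFeasible ε T p m R z x) (hj : x j t ≠ 0) :
    p t j ≤ ENNReal.ofReal ((1 + ε) * T) :=
  have ⟨_, hxfin, _⟩ := h
  not_lt.1 fun hlt => hj (hxfin j t hlt)

theorem mem_bigSet_of_mem_bigJobs (h : MILPFeasible ε T p m R z x)
    (hj : j ∈ bigJobs ε T p x t) : p t j ∈ bigSet ε T p t := by
  obtain ⟨-, hj, hbig⟩ := mem_filter.1 hj
  exact mem_filter.2 ⟨mem_image_of_mem _ (mem_univ j), hbig,
    ((h.le_of_ne_zero hj).trans_lt ENNReal.ofReal_lt_top).ne⟩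

theorem exists_conf (h : MILPFeasible ε T p m R z x) (hz : ∀ C t, ∃ n : ℕ, z C t = n)
    (t : Fin K) : ∃ conf : Fin (m t) → ℝ≥0∞ → ℕ, (∀ k, IsConf ε T (bigSet ε T p t) (conf k)) ∧
      ∀ F : (ℝ≥0∞ → ℕ) → ℝ≥0∞, ∑' C, F C * z C t = ∑ k, F (conf k) := by
  obtain ⟨hsupp, -, hmachines, -⟩ := h
  choose n hn using hz
  have hsum := hmachines t
  simp only [hn] at hsum
  obtain ⟨conf, hne, hF⟩ := exists_fin_tuple_of_tsum_natCast_eq (n · t) hsum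
  refine ⟨conf, fun k => ?_, by simpa only [hn] using hF⟩
  by_contra hk
  exact hne k (by exact_mod_cast (hn _ t).symm.trans (hsupp _ t hk))

theorem card_bigJobs_filter_le (h : MILPFeasible ε T p m R z x)
    (hx : ∀ j t, ∃ n : ℕ, x j t = n) {conf : Fin (m t) → ℝ≥0∞ → ℕ}
    (hconf : ∀ F : (ℝ≥0∞ → ℕ) → ℝ≥0∞, ∑' C, F C * z C t = ∑ k, F (conf k)) (v : ℝ≥0∞) :
    #{j ∈ bigJobs ε T p x t | p t j = v} ≤ ∑ k, conf k v := by
  by_cases hv : v ∈ bigSet ε T p t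
  · have ⟨_, _, _, _, hslots, _⟩ := h
    have := (card_filter_le_sum hx (A := bigJobs ε T p x t) (fun j hj => (mem_filter.1 hj).2.1)
      v).trans (hslots t v hv)
    rw [hconf fun C => C v] at this
    exact_mod_cast this
  · have hempty : {j ∈ bigJobs ε T p x t | p t j = v} = ∅ :=
      filter_eq_empty_iff.2 fun j hj hjv => hv (hjv ▸ h.mem_bigSet_of_mem_bigJobs hj)
    simp [hempty]

theorem sum_smallJobs_le (h : MILPFeasible ε T p m R z x)
    (hx : ∀ j t, ∃ n : ℕ, x j t = n) {conf : Fin (m t) → ℝ≥0∞ → ℕ}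
    (hconf : ∀ F : (ℝ≥0∞ → ℕ) → ℝ≥0∞, ∑' C, F C * z C t = ∑ k, F (conf k)) :
    ∑ k, confSize (bigSet ε T p t) (conf k) + ∑ j ∈ smallJobs ε T p x t, p t j ≤
      m t * ENNReal.ofReal R := by
  have ⟨_, _, _, _, _, hload⟩ := h
  refine le_trans ?_ (hload t)
  rw [hconf, sum_eq_sum_card_filter_mul fun j => mem_smallSet_of_mem_smallJobs]
  refine add_le_add le_rfl (sum_le_sum fun v _ => ?_)
  rw [mul_comm]
  gcongr
  exact card_filter_le_sum hx (A := smallJobs ε T p x t) (fun j hj => (mem_filter.1 hj).2.1) v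

-- With no machine of type `t`, constraint (3) leaves no slot for a big job and (4) no room for
-- a small one.
theorem pos_of_ne_zero (h : MILPFeasible ε T p m R z x) (hz : ∀ C t, ∃ n : ℕ, z C t = n)
    (hx : ∀ j t, ∃ n : ℕ, x j t = n) (hp : ∀ t j, p t j ≠ 0) (hj : x j t ≠ 0) : 0 < m t := by
  obtain ⟨conf, -, hconf⟩ := h.exists_conf hz t
  refine Nat.pos_of_ne_zero fun h0 => ?_
  have : IsEmpty (Fin (m t)) := by rw [h0]; infer_instance
  have hmem : j ∈ bigJobs ε T p x t ∪ smallJobs ε T p x t := by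
    rw [bigJobs_union_smallJobs]
    simpa using hj
  rcases mem_union.1 hmem with hbig | hsmall
  · have := h.card_bigJobs_filter_le hx hconf (p t j)
    simp only [univ_eq_empty, sum_empty, nonpos_iff_eq_zero, card_eq_zero] at this
    exact (filter_eq_empty_iff.1 this hbig) rfl
  · have := h.sum_smallJobs_le hx hconf
    simp only [univ_eq_empty, sum_empty, h0, CharP.cast_eq_zero, zero_mul, zero_add,
      nonpos_iff_eq_zero, sum_eq_zero_iff] at this
    exact hp t j (this j hsmall)

theorem exists_schedule_of_type (h : MILPFeasible ε T p m R z x)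
    (hz : ∀ C t, ∃ n : ℕ, z C t = n) (hx : ∀ j t, ∃ n : ℕ, x j t = n)
    (hR : ENNReal.ofReal ((1 + ε) * T) ≤ ENNReal.ofReal R) (ht : 0 < m t) :
    ∃ g : J → Fin (m t), ∀ k, ∑ j with x j t ≠ 0 ∧ g j = k, p t j ≤
      ENNReal.ofReal R + ENNReal.ofReal (ε ^ 2 * T) := by
  obtain ⟨conf, hIsConf, hconf⟩ := h.exists_conf hz t
  have : Nonempty (Fin (m t)) := ⟨⟨0, ht⟩⟩
  obtain ⟨fB, hfB⟩ := exists_card_filter_and_le (p t) conf _ (h.card_bigJobs_filter_le hx hconf)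
  have hℓ : ∀ k, ∑ j ∈ bigJobs ε T p x t with fB j = k, p t j ≤
      confSize (bigSet ε T p t) (conf k) :=
    fun k => sum_le_confSize (fun j hj => h.mem_bigSet_of_mem_bigJobs (mem_filter.1 hj).1)
      fun v _ => by simpa only [filter_filter] using hfB k v
  have htotal := (add_le_add_left (sum_le_sum fun k _ => hℓ k) _).trans
    (h.sum_smallJobs_le hx hconf)
  obtain ⟨fS, hfS⟩ := exists_add_sum_filter_le (p t) (smallJobs ε T p x t)
    (fun j hj => (mem_filter.1 hj).2.2) _
    (fun k => ((hℓ k).trans ((hIsConf k).2.trans hR)).trans le_self_add)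
    (by simpa using htotal)
  refine ⟨(bigJobs ε T p x t).piecewise fB fS, fun k => ?_⟩
  rw [← filter_filter, ← bigJobs_union_smallJobs,
    sum_filter_union_piecewise disjoint_bigJobs_smallJobs]
  exact hfS k

end MILPFeasible

end MILP

theorem MILP_to_schedule_general (ε T R : ℝ) (hε : 0 < ε) (hT : 0 < T)
    (hR : (1 + ε) * T ≤ R)
    (p : Fin K → J → ℝ≥0∞) (hp : ∀ t j, p t j ≠ 0) (m : Fin K → ℕ)
    (hMILP : ∃ z x, MILPFeasible ε T p m R z x ∧
      (∀ C t, ∃ n : ℕ, z C t = n) ∧ (∀ j t, ∃ n : ℕ, x j t = n)) :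
    ∃ σ : J → Machine m, ∀ i, load p m σ i ≤ ENNReal.ofReal (R + ε ^ 2 * T) := by
  obtain ⟨z, x, h, hz, hx⟩ := hMILP
  have ⟨_, _, _, hassign, _⟩ := h
  choose τ _ hτ using fun j => exists_ne_zero_of_sum_ne_zero ((hassign j).trans_ne one_ne_zero)
  choose g hg using fun t (ht : 0 < m t) =>
    h.exists_schedule_of_type hz hx (ENNReal.ofReal_le_ofReal hR) ht
  refine ⟨fun j => ⟨τ j, g (τ j) (h.pos_of_ne_zero hz hx hp (hτ j)) j⟩, ?_⟩
  rintro ⟨t, k⟩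
  rw [ENNReal.ofReal_add ((by positivity : 0 ≤ (1 + ε) * T).trans hR) (by positivity)]
  refine le_trans (sum_le_sum_of_subset fun j hj => ?_) (hg t k.pos k)
  obtain ⟨rfl, hk⟩ := Sigma.mk.inj_iff.1 (mem_filter.1 hj).2
  exact mem_filter.2 ⟨mem_univ j, hτ j, eq_of_heq hk⟩

/-- An integral feasible solution of MILP(R) with `R ≥ T̄ = (1+ε)T`
yields a schedule with makespan at most `R + ε²T`. -/
theorem MILP_to_schedule (ε T R : ℝ) (hε : 0 < ε) (hε1 : ε ≤ 1) (hT : 0 < T)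
    (hR : (1 + ε) * T ≤ R)
    (p : Fin K → J → ℝ≥0∞) (hp : ∀ t j, p t j ≠ 0) (m : Fin K → ℕ)
    (hMILP : ∃ z x, MILPFeasible ε T p m R z x ∧
      (∀ C t, ∃ n : ℕ, z C t = n) ∧ (∀ j t, ∃ n : ℕ, x j t = n)) :
    ∃ σ : J → Machine m, ∀ i, load p m σ i ≤ ENNReal.ofReal (R + ε ^ 2 * T) :=
  MILP_to_schedule_general ε T R hε hT hR p hp m hMILP
end
end

section
/- Let 𝒥 be a finite set, K ∈ ℕ, and for each t ∈ {1,…,K} let p_{t,·} : 𝒥 → ℝ ∪ {∞} assign sizes. Let x : 𝒥 × {1,…,K} → [0,1] satisfy ∑_{t} x_{j,t} = 1 for every j ∈ 𝒥 and x_{j,t} = 0 whenever p_{t,j} = ∞. Then there exists a map τ : 𝒥 → {1,…,K} with x_{j,τ(j)} > 0 for every j, such that for every type t and every value v, |{j ∈ 𝒥 : τ(j) = t and p_{t,j} = v}| ≤ ⌈∑_{j : p_{t,j} = v} x_{j,t}⌉. -/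
open Finset
open scoped Classical

/-!
Hall's marriage theorem in place of the paper's flow integrality. Give each class `k` of
options `⌈load k⌉` slots and let a job compete for the slots of every class it is
fractionally assigned to. A set `s` of jobs carries fractional mass `#s`, all of it on classes
reachable from `s`, whose loads, hence slot counts, sum to at least `#s`; so Hall's condition
holds, and a matching of jobs to slots is the required assignment.
-/

section Rounding

variable {J ι κ : Type*} [Fintype J] [Fintype ι]

noncomputable def classLoad (x : J → ι → ℝ) (c : J → ι → κ) (k : κ) : ℝ :=
  ∑ j, ∑ i ∈ univ.filter (fun i => c j i = k), x j i

noncomputable def supportClasses (x : J → ι → ℝ) (c : J → ι → κ) (j : J) : Finset κ :=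
  (univ.filter fun i => 0 < x j i).image (c j)

variable {x : J → ι → ℝ} (c : J → ι → κ)

theorem classLoad_nonneg (hx0 : ∀ j i, 0 ≤ x j i) (k : κ) : 0 ≤ classLoad x c k :=
  sum_nonneg fun j _ => sum_nonneg fun i _ => hx0 j i

theorem card_le_sum_classLoad (hx0 : ∀ j i, 0 ≤ x j i) (hsum : ∀ j, ∑ i, x j i = 1)
    (s : Finset J) : (#s : ℝ) ≤ ∑ k ∈ s.biUnion (supportClasses x c), classLoad x c k := by
  set C := s.biUnion (supportClasses x c)
  set supp : J → Finset ι := fun j => univ.filter (0 < x j ·)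
  have hsupp : ∀ j, ∑ i ∈ supp j, x j i = 1 := fun j =>
    (sum_filter_of_ne fun i _ hi => (hx0 j i).lt_of_ne' hi).trans (hsum j)
  have hmaps : ∀ j ∈ s, ∀ i ∈ supp j, c j i ∈ C := fun j hj i hi =>
    mem_biUnion.2 ⟨j, hj, mem_image_of_mem _ hi⟩
  calc (#s : ℝ) = ∑ j ∈ s, ∑ i ∈ supp j, x j i := by simp [hsupp]
    _ = ∑ j ∈ s, ∑ k ∈ C, ∑ i ∈ (supp j).filter (c j · = k), x j i :=
        sum_congr rfl fun j hj => (sum_fiberwise_of_maps_to (hmaps j hj) _).symm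
    _ = ∑ k ∈ C, ∑ j ∈ s, ∑ i ∈ (supp j).filter (c j · = k), x j i := sum_comm
    _ ≤ ∑ k ∈ C, ∑ j ∈ s, ∑ i ∈ univ.filter (c j · = k), x j i := by
        gcongr with k _ j
        exacts [fun i _ _ => hx0 j i, subset_univ _]
    _ ≤ ∑ k ∈ C, classLoad x c k := by
        gcongr with k
        exact sum_le_sum_of_subset_of_nonneg (subset_univ s)
          fun j _ _ => sum_nonneg fun i _ => hx0 j i

theorem exists_assignment_of_classLoad_le (hx0 : ∀ j i, 0 ≤ x j i)
    (hsum : ∀ j, ∑ i, x j i = 1) (n : κ → ℕ) (hn : ∀ k, classLoad x c k ≤ n k) :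
    ∃ τ : J → ι, (∀ j, 0 < x j (τ j)) ∧ ∀ k, #{j | c j (τ j) = k} ≤ n k := by
  let slots : J → Finset (Σ _ : κ, ℕ) := fun j =>
    (supportClasses x c j).sigma fun k => range (n k)
  have hall : ∀ s : Finset J, #s ≤ #(s.biUnion slots) := by
    intro s
    have hunion :
        s.biUnion slots = (s.biUnion (supportClasses x c)).sigma fun k => range (n k) := by
      ext ⟨k, m⟩
      simp only [slots, mem_biUnion, mem_sigma, mem_range]
      exact ⟨fun ⟨j, hj, hk, hm⟩ => ⟨⟨j, hj, hk⟩, hm⟩,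
        fun ⟨⟨j, hj, hk⟩, hm⟩ => ⟨j, hj, hk, hm⟩⟩
    have hmass := card_le_sum_classLoad c hx0 hsum s
    rw [hunion, card_sigma]
    simp only [card_range]
    exact_mod_cast hmass.trans (sum_le_sum fun k _ => hn k)
  obtain ⟨f, hf_inj, hf_mem⟩ := (all_card_le_biUnion_card_iff_exists_injective slots).1 hall
  have hslot : ∀ j, ∃ i, 0 < x j i ∧ c j i = (f j).1 ∧ (f j).2 < n (f j).1 := by
    intro j
    obtain ⟨hk, hm⟩ := mem_sigma.1 (hf_mem j)
    obtain ⟨i, hi, hik⟩ := mem_image.1 hk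
    exact ⟨i, (mem_filter.1 hi).2, hik, mem_range.1 hm⟩
  choose τ hτ_pos hτ_class hτ_lt using hslot
  refine ⟨τ, hτ_pos, fun k => ?_⟩
  have hclass : ∀ j ∈ ({j | c j (τ j) = k} : Finset J), (f j).1 = k := fun j hj =>
    (hτ_class j).symm.trans (mem_filter.1 hj).2
  simpa using card_le_card_of_injOn (fun j => (f j).2)
    (fun j hj => mem_range.2 (hclass j hj ▸ hτ_lt j))
    fun j hj j' hj' h =>
      hf_inj (Sigma.ext ((hclass j hj).trans (hclass j' hj').symm) (heq_of_eq h))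

theorem exists_assignment_card_le_ceil_classLoad (hx0 : ∀ j i, 0 ≤ x j i)
    (hsum : ∀ j, ∑ i, x j i = 1) :
    ∃ τ : J → ι, (∀ j, 0 < x j (τ j)) ∧
      ∀ k, (#{j | c j (τ j) = k} : ℤ) ≤ ⌈classLoad x c k⌉ := by
  obtain ⟨τ, hτ_pos, hτ_card⟩ :=
    exists_assignment_of_classLoad_le c hx0 hsum (fun k => ⌈classLoad x c k⌉₊)
      fun k => Nat.le_ceil _
  refine ⟨τ, hτ_pos, fun k => ?_⟩
  rw [← Int.natCast_ceil_eq_ceil (classLoad_nonneg c hx0 k)]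
  exact_mod_cast hτ_card k

end Rounding

theorem classLoad_eq_sum_filter {J : Type*} [Fintype J] {K : ℕ} (p : Fin K → J → WithTop ℝ)
    (x : J → Fin K → ℝ) (t : Fin K) (v : WithTop ℝ) :
    classLoad x (fun j i => (i, p i j)) (t, v) =
      ∑ j ∈ univ.filter (fun j => p t j = v), x j t := by
  rw [classLoad, sum_filter]
  refine sum_congr rfl fun j _ => ?_
  simp only [Prod.mk.injEq]
  rw [sum_filter]
  simp [ite_and]

theorem fractional_assignment_rounding_general {J : Type*} [Fintype J] (K : ℕ)
    (p : Fin K → J → WithTop ℝ)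
    (x : J → Fin K → ℝ)
    (hx0 : ∀ j t, 0 ≤ x j t)
    (hsum : ∀ j, ∑ t, x j t = 1) :
    ∃ τ : J → Fin K, (∀ j, 0 < x j (τ j)) ∧
      ∀ (t : Fin K) (v : WithTop ℝ),
        (((univ.filter fun j => τ j = t ∧ p t j = v).card : ℤ)) ≤
          ⌈∑ j ∈ univ.filter (fun j => p t j = v), x j t⌉ := by
  obtain ⟨τ, hτ_pos, hτ_card⟩ :=
    exists_assignment_card_le_ceil_classLoad (fun j i => (i, p i j)) hx0 hsum
  refine ⟨τ, hτ_pos, fun t v => ?_⟩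
  rw [← classLoad_eq_sum_filter]
  convert hτ_card (t, v) using 4
  rw [Prod.mk.injEq]
  exact and_congr_right fun h => h ▸ Iff.rfl

/-- Rounding the fractional job-assignment variables via flow
integrality: each job is assigned to a type it is fractionally assigned to, and for each
type and value the number of assigned jobs of that value is at most the rounded-up
fractional number. -/
theorem fractional_assignment_rounding {J : Type*} [Fintype J] (K : ℕ)
    (p : Fin K → J → WithTop ℝ)
    (x : J → Fin K → ℝ)
    (hx0 : ∀ j t, 0 ≤ x j t) (hx1 : ∀ j t, x j t ≤ 1)
    (hsum : ∀ j, ∑ t, x j t = 1)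
    (hinf : ∀ j t, p t j = ⊤ → x j t = 0) :
    ∃ τ : J → Fin K, (∀ j, 0 < x j (τ j)) ∧
      ∀ (t : Fin K) (v : WithTop ℝ),
        (((univ.filter fun j => τ j = t ∧ p t j = v).card : ℤ)) ≤
          ⌈∑ j ∈ univ.filter (fun j => p t j = v), x j t⌉ :=
  fractional_assignment_rounding_general K p x hx0 hsum
end

section
/- Suppose additionally that every value in each S_t has the form ε²T/(1+ε)^i for some integer i ≥ 0. If MILP(T̄) has a feasible solution (z integral, x possibly fractional), then MILP(T̄ + εT + ε²T) has an integral feasible solution, where the configuration sets 𝒞_t are unchanged (still defined by size(C) ≤ T̄). -/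
/-!
The configuration variables `z` are kept and only the job assignment `x` is rounded. View `x` as
a fractional assignment of jobs to classes `(t, p)` (machine type, processing time) and give each
class `⌈∑_{j ∈ J_t(p)} x_{j,t}⌉` slots. Hall's theorem turns `x` into an integral assignment
using only pairs with `x_{j,t} ≠ 0` and respecting all slot counts. For a big value `p` the
right-hand side `∑_C C_p z_{C,t}` of (3) is an integer, so it still bounds the rounded-up count.
For small values, rounding up adds at most one job of each small size `p` that is actually
used, and these sizes are distinct terms `ε²T/(1+ε)^i` of a geometric series of sum
`ε²T(1+ε)/ε = εT + ε²T`; when `m_t ≥ 1` this is absorbed by the extra `m_t (εT + ε²T)` of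
room in (4), and when `m_t = 0` constraint (4) forces `p · ∑_{j ∈ J_t(p)} x_{j,t} = 0`, so that
rounding adds no load.
-/

open Finset
open scoped Classical ENNReal

noncomputable section

variable {J : Type*} [Fintype J] {K : ℕ}

section Rounding

variable {α ι κ : Type*} [Fintype α] [Fintype ι] [DecidableEq ι] [DecidableEq κ]

/-- The Hall neighbourhood of job `j`: the numbered slots `k < cap i q` of every class `(i, q)`
with `g i j = q` that `j` uses fractionally (`x j i ≠ 0`). -/
def roundingSlots (x : α → ι → ℝ≥0∞) (g : ι → α → κ) (cap : ι → κ → ℕ) (j : α) :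
    Finset (Σ _ : ι × κ, ℕ) :=
  (({i | x j i ≠ 0} : Finset ι).image fun i => (i, g i j)).sigma fun q => range (cap q.1 q.2)

theorem card_le_card_biUnion_roundingSlots (x : α → ι → ℝ≥0∞) (g : ι → α → κ)
    (cap : ι → κ → ℕ) (hx : ∀ j, ∑ i, x j i = 1)
    (hcap : ∀ i q, ∑ j with g i j = q, x j i ≤ cap i q) (S : Finset α) :
    #S ≤ #(S.biUnion (roundingSlots x g cap)) := by
  set A : α → Finset (ι × κ) := fun j => ({i | x j i ≠ 0} : Finset ι).image fun i => (i, g i j)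
  set P := S.biUnion A
  have hunion : S.biUnion (roundingSlots x g cap) = P.sigma fun q => range (cap q.1 q.2) := by
    ext ⟨q, k⟩
    simp only [roundingSlots, mem_biUnion, mem_sigma, P, A]
    tauto
  have hrow : ∀ j ∈ S, ∑ i, x j i ≤ ∑ q ∈ P, if g q.1 j = q.2 then x j q.1 else 0 := by
    intro j hj
    calc ∑ i, x j i = ∑ i with x j i ≠ 0, x j i := (sum_filter_ne_zero _).symm
      _ = ∑ q ∈ A j, if g q.1 j = q.2 then x j q.1 else 0 := by
        rw [sum_image fun i _ i' _ h => congrArg Prod.fst h]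
        simp
      _ ≤ _ := sum_le_sum_of_subset (subset_biUnion_of_mem A hj)
  have hcount : (#S : ℝ≥0∞) ≤ ∑ q ∈ P, (cap q.1 q.2 : ℝ≥0∞) :=
    calc (#S : ℝ≥0∞) = ∑ j ∈ S, ∑ i, x j i := by simp [hx]
      _ ≤ ∑ j ∈ S, ∑ q ∈ P, if g q.1 j = q.2 then x j q.1 else 0 := sum_le_sum hrow
      _ = ∑ q ∈ P, ∑ j ∈ S, if g q.1 j = q.2 then x j q.1 else 0 := sum_comm
      _ ≤ ∑ q ∈ P, ∑ j with g q.1 j = q.2, x j q.1 := by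
        gcongr with q
        rw [← sum_filter]
        exact sum_le_sum_of_subset fun j => by simp +contextual
      _ ≤ ∑ q ∈ P, (cap q.1 q.2 : ℝ≥0∞) := sum_le_sum fun q _ => hcap q.1 q.2
  rw [hunion, card_sigma]
  simp only [card_range]
  exact_mod_cast hcount

theorem exists_assignment_card_le (x : α → ι → ℝ≥0∞) (g : ι → α → κ) (cap : ι → κ → ℕ)
    (hx : ∀ j, ∑ i, x j i = 1) (hcap : ∀ i q, ∑ j with g i j = q, x j i ≤ cap i q) :
    ∃ σ : α → ι, (∀ j, x j (σ j) ≠ 0) ∧ ∀ i q, #{j | g i j = q ∧ σ j = i} ≤ cap i q := by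
  obtain ⟨f, hf_inj, hf_mem⟩ := (all_card_le_biUnion_card_iff_exists_injective _).1
    (card_le_card_biUnion_roundingSlots x g cap hx hcap)
  simp only [roundingSlots, mem_sigma, mem_image, mem_filter, mem_univ, true_and,
    mem_range] at hf_mem
  choose hf_class hf_slot using hf_mem
  refine ⟨fun j => (f j).1.1, fun j => ?_, fun i q => ?_⟩
  · obtain ⟨i, hi, hfi⟩ := hf_class j
    show x j (f j).1.1 ≠ 0
    rwa [← hfi]
  · have hfst : ∀ j, g i j = q ∧ (f j).1.1 = i → (f j).1 = (i, q) := by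
      rintro j ⟨rfl, rfl⟩
      obtain ⟨i, -, hfi⟩ := hf_class j
      rw [← hfi]
    calc #{j | g i j = q ∧ (f j).1.1 = i} ≤ #(range (cap i q)) := by
          refine card_le_card_of_injOn (fun j => (f j).2) (fun j hj => ?_) fun j hj j' hj' h => ?_
          · simp only [mem_coe, mem_filter, mem_univ, true_and] at hj
            simpa [hfst j hj] using hf_slot j
          · simp only [mem_coe, mem_filter, mem_univ, true_and] at hj hj'
            exact hf_inj (Sigma.ext ((hfst j hj).trans (hfst j' hj').symm) (heq_of_eq h))
      _ = cap i q := card_range _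

end Rounding

namespace ENNReal

theorem le_natCeil_toNNReal {a : ℝ≥0∞} (ha : a ≠ ⊤) : a ≤ ⌈a.toNNReal⌉₊ := by
  rw [← coe_toNNReal ha]
  exact_mod_cast Nat.le_ceil _

theorem natCeil_toNNReal_le_add_one (a : ℝ≥0∞) : (⌈a.toNNReal⌉₊ : ℝ≥0∞) ≤ a + 1 := by
  rcases eq_or_ne a ⊤ with rfl | ha
  · simp
  rw [← coe_toNNReal ha]
  exact_mod_cast (Nat.ceil_lt_add_one zero_le).le

theorem mul_natCeil_toNNReal_le (v a : ℝ≥0∞) :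
    v * ⌈a.toNNReal⌉₊ ≤ v * a + if v * a ≠ 0 then v else 0 := by
  split_ifs with h
  · calc v * ⌈a.toNNReal⌉₊ ≤ v * (a + 1) := by gcongr; exact natCeil_toNNReal_le_add_one a
      _ = v * a + v := by rw [mul_add, mul_one]
  · rcases mul_eq_zero.1 (not_not.1 h) with rfl | rfl <;> simp

theorem exists_nat_eq_tsum_natCast {α : Type*} {n : α → ℕ} (h : ∑' i, (n i : ℝ≥0∞) ≠ ⊤) :
    ∃ N : ℕ, ∑' i, (n i : ℝ≥0∞) = N := by
  have hfin := finite_const_le_of_tsum_ne_top h one_ne_zero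
  refine ⟨∑ i ∈ hfin.toFinset, n i, ?_⟩
  rw [tsum_eq_sum fun i hi => ?_]
  · push_cast; rfl
  · simpa [Nat.one_le_iff_ne_zero] using hi

theorem natCeil_toNNReal_le_tsum_natCast {α : Type*} {a : ℝ≥0∞} {n : α → ℕ}
    (h : a ≤ ∑' i, (n i : ℝ≥0∞)) : (⌈a.toNNReal⌉₊ : ℝ≥0∞) ≤ ∑' i, (n i : ℝ≥0∞) := by
  rcases eq_or_ne (∑' i, (n i : ℝ≥0∞)) ⊤ with htop | htop
  · simp [htop]
  obtain ⟨N, hN⟩ := exists_nat_eq_tsum_natCast htop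
  rw [hN] at h ⊢
  have : a.toNNReal ≤ N := by simpa using toNNReal_mono (natCast_ne_top N) h
  exact_mod_cast Nat.ceil_le.2 this

theorem sum_le_of_forall_eq_ofReal_div_pow {c δ : ℝ} (hc : 0 ≤ c) (hδ : 0 < δ)
    {s : Finset ℝ≥0∞} (hs : ∀ v ∈ s, ∃ i : ℕ, v = ENNReal.ofReal (c / (1 + δ) ^ i)) :
    ∑ v ∈ s, v ≤ ENNReal.ofReal (c * (1 + δ) / δ) := by
  obtain ⟨I, -, rfl⟩ := (subset_set_image_iff (s := Set.univ)
    (f := fun i : ℕ => ENNReal.ofReal (c / (1 + δ) ^ i))).1 fun v hv => by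
      simpa [eq_comm] using hs v hv
  refine (sum_image_le_of_nonneg fun _ _ => zero_le).trans ?_
  rw [← ofReal_sum_of_nonneg fun i _ => by positivity]
  refine ofReal_le_ofReal ?_
  have hr0 : 0 ≤ (1 + δ)⁻¹ := by positivity
  have hr1 : (1 + δ)⁻¹ < 1 := inv_lt_one_of_one_lt₀ (by linarith)
  calc ∑ i ∈ I, c / (1 + δ) ^ i = c * ∑ i ∈ I, (1 + δ)⁻¹ ^ i := by
        rw [mul_sum]; congr! 1 with i; rw [inv_pow, div_eq_mul_inv]
    _ ≤ c * ∑' i, (1 + δ)⁻¹ ^ i := by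
        gcongr
        exact (summable_geometric_of_lt_one hr0 hr1).sum_le_tsum I fun _ _ => by positivity
    _ = c * (1 + δ) / δ := by
        rw [tsum_geometric_of_lt_one hr0 hr1, inv_eq_one_div (1 + δ), one_sub_div (by positivity),
          add_sub_cancel_left, inv_div, mul_div_assoc]

theorem add_sum_mul_natCeil_le {ι : Type*} (A R E : ℝ≥0∞) (S : Finset ι) (w f : ι → ℝ≥0∞)
    (m : ℕ) (hload : A + ∑ v ∈ S, w v * f v ≤ m * R)
    (hE : ∑ v ∈ S with w v * f v ≠ 0, w v ≤ E) :
    A + ∑ v ∈ S, w v * ⌈(f v).toNNReal⌉₊ ≤ m * (R + E) := by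
  have hround : ∑ v ∈ S, w v * ⌈(f v).toNNReal⌉₊ ≤
      ∑ v ∈ S, w v * f v + ∑ v ∈ S with w v * f v ≠ 0, w v := by
    rw [sum_filter, ← sum_add_distrib]
    exact sum_le_sum fun v _ => mul_natCeil_toNNReal_le (w v) (f v)
  rcases eq_or_ne m 0 with rfl | hm
  · obtain ⟨rfl, hsum⟩ := add_eq_zero.1 <| nonpos_iff_eq_zero.1 <| by
      simpa only [CharP.cast_eq_zero, zero_mul] using hload
    rw [filter_false_of_mem fun v hv => not_not.2 (sum_eq_zero_iff.1 hsum v hv), sum_empty,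
      hsum, add_zero] at hround
    simp [nonpos_iff_eq_zero.1 hround]
  calc A + ∑ v ∈ S, w v * ⌈(f v).toNNReal⌉₊ ≤ (A + ∑ v ∈ S, w v * f v) + E := by
        rw [add_assoc]; gcongr; exact hround.trans (by gcongr)
    _ ≤ m * R + m * E := by
        gcongr
        exact le_mul_of_one_le_left zero_le (by exact_mod_cast Nat.one_le_iff_ne_zero.2 hm)
    _ = m * (R + E) := (mul_add _ _ _).symm

end ENNReal

theorem MILP_rounding_general (ε T : ℝ) (hε : 0 < ε) (hT : 0 < T)
    (p : Fin K → J → ℝ≥0∞) (m : Fin K → ℕ)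
    (hgeo : ∀ t, ∀ v ∈ smallSet ε T p t, ∃ i : ℕ,
      v = ENNReal.ofReal (ε ^ 2 * T / (1 + ε) ^ i))
    (hMILP : ∃ z x, MILPFeasible ε T p m ((1 + ε) * T) z x ∧
      (∀ C t, ∃ n : ℕ, z C t = n)) :
    ∃ z x, MILPFeasible ε T p m ((1 + ε) * T + ε * T + ε ^ 2 * T) z x ∧
      (∀ C t, ∃ n : ℕ, z C t = n) ∧
      (∀ j t, ∃ n : ℕ, x j t = n) := by
  obtain ⟨z, x, ⟨hz_conf, hx_big, hz_sum, hx_sum, hx_cap, hx_load⟩, hz_int⟩ := hMILP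
  choose n hn using hz_int
  have hx_le_one : ∀ j t, x j t ≤ 1 := fun j t =>
    (single_le_sum (f := fun t => x j t) (fun _ _ => zero_le) (mem_univ t)).trans_eq (hx_sum j)
  obtain ⟨σ, hσ, hσ_card⟩ := exists_assignment_card_le x p
    (fun t v => ⌈(∑ j with p t j = v, x j t).toNNReal⌉₊) hx_sum fun t v =>
      ENNReal.le_natCeil_toNNReal
        (ENNReal.sum_ne_top.2 fun j _ => ne_top_of_le_ne_top ENNReal.one_ne_top (hx_le_one j t))
  have hcount : ∀ t v, ∑ j with p t j = v, (if σ j = t then 1 else 0 : ℝ≥0∞) ≤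
      ⌈(∑ j with p t j = v, x j t).toNNReal⌉₊ := by
    intro t v
    rw [sum_boole, filter_filter]
    exact_mod_cast hσ_card t v
  refine ⟨_, fun j t => if σ j = t then 1 else 0, ⟨hz_conf, fun j t hjt => ?_, hz_sum,
    fun j => by simp, fun t v hv => ?_, fun t => ?_⟩, fun C t => ⟨n C t, hn C t⟩, fun j t => ?_⟩
  · dsimp only
    rw [if_neg]
    rintro rfl
    exact hσ j (hx_big j _ hjt)
  · refine (hcount t v).trans ?_
    simp only [hn, ← Nat.cast_mul] at hx_cap ⊢
    exact ENNReal.natCeil_toNNReal_le_tsum_natCast (hx_cap t v hv)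
  · rw [show (1 + ε) * T + ε * T + ε ^ 2 * T = (1 + ε) * T + ε ^ 2 * T * (1 + ε) / ε by
      field_simp; ring, ENNReal.ofReal_add (by positivity) (by positivity)]
    refine le_trans ?_ (ENNReal.add_sum_mul_natCeil_le _ _ _ _ _ _ _ (hx_load t)
      (ENNReal.sum_le_of_forall_eq_ofReal_div_pow (by positivity) hε fun v hv =>
        hgeo t v (mem_filter.1 hv).1))
    gcongr with v
    exact hcount t v
  · exact ⟨if σ j = t then 1 else 0, by simp⟩

/-- Rounding a feasible MILP solution to an integral one, at the cost of
increasing the right-hand side from `T̄` to `T̄ + εT + ε²T` (the small values being of the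
geometric form `ε²T/(1+ε)^i`). -/
theorem MILP_rounding (ε T : ℝ) (hε : 0 < ε) (hε1 : ε ≤ 1) (hT : 0 < T)
    (p : Fin K → J → ℝ≥0∞) (hp : ∀ t j, p t j ≠ 0) (m : Fin K → ℕ)
    (hgeo : ∀ t, ∀ v ∈ smallSet ε T p t, ∃ i : ℕ,
      v = ENNReal.ofReal (ε ^ 2 * T / (1 + ε) ^ i))
    (hMILP : ∃ z x, MILPFeasible ε T p m ((1 + ε) * T) z x ∧
      (∀ C t, ∃ n : ℕ, z C t = n)) :
    ∃ z x, MILPFeasible ε T p m ((1 + ε) * T + ε * T + ε ^ 2 * T) z x ∧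
      (∀ C t, ∃ n : ℕ, z C t = n) ∧
      (∀ j t, ∃ n : ℕ, x j t = n) :=
  MILP_rounding_general ε T hε hT p m hgeo hMILP
end
end

section
/- If MILP(T̄) has a feasible solution (with integral z-variables), then it has a feasible solution with the same x-variables in which, for every machine type t, the number of configurations C ∈ 𝒞_t with z_{C,t} ≠ 0 is at most 2·(|B_t|+1)·log₂(4·(|B_t|+1)·(1+ε)/ε²). -/
open Finset
open scoped Classical ENNReal

noncomputable section

variable {J : Type*} [Fintype J] {K : ℕ}

/-!
Only the moments `∑_C z_{C,t} · (1, C)` of the configuration variables of type `t` enter the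
constraints, and these are vectors in `ℕ^(|B_t|+1)` whose generators have entries at most
`M = (1+ε)/ε²`. By the Eisenbrand–Shmonin argument such a combination can be rewritten with
support `N` satisfying `2^N ≤ (N·M + 1)^(|B_t|+1)`: otherwise two distinct subsets of the support
have the same sum, and moving weight from one difference to the other kills a coefficient.
That inequality forces `N ≤ 2(|B_t|+1)·log₂(4(|B_t|+1)M)`.
-/

open Finsupp Real

lemma le_two_mul_logb_of_le_mul_logb {x d M : ℝ} (hx : 0 < x) (hd : 0 < d) (hM : 0 < M)
    (h : x ≤ d * logb 2 (2 * x * M)) : x ≤ 2 * d * logb 2 (4 * d * M) := by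
  have hL : 1 / 2 < log 2 := by linarith [log_two_gt_d9]
  have hL1 : log 2 < 1 := by linarith [log_two_lt_d9]
  have hlog4 : log 4 = 2 * log 2 := by
    rw [show (4 : ℝ) = 2 ^ 2 by norm_num, log_pow]; norm_num
  -- `log y ≤ y - 1` at `y = x / (4d)`: the term `x / 4` it produces is absorbed since `log 2 > 1/2`
  have htangent : log x ≤ x / (4 * d) - 1 + 2 * log 2 + log d := by
    have := log_le_sub_one_of_pos (show 0 < x / (4 * d) by positivity)
    rw [log_div hx.ne' (by positivity), log_mul (by norm_num) hd.ne', hlog4] at this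
    linarith
  have hquarter : d * (x / (4 * d)) = x / 4 := by field_simp
  simp only [logb, mul_div_assoc'] at h ⊢
  rw [le_div_iff₀ (log_pos one_lt_two)] at h ⊢
  rw [log_mul (by positivity) hM.ne', log_mul (by positivity) hx.ne'] at h
  rw [log_mul (by positivity) hM.ne', log_mul (by norm_num) hd.ne', hlog4]
  nlinarith [mul_le_mul_of_nonneg_left htangent hd.le]

lemma le_two_mul_logb_of_two_pow_le {N d : ℕ} {M : ℝ} (hM : 1 ≤ M)
    (h : (2 : ℝ) ^ N ≤ (N * M + 1) ^ d) : (N : ℝ) ≤ 2 * d * logb 2 (4 * d * M) := by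
  rcases Nat.eq_zero_or_pos N with rfl | hN
  · rcases Nat.eq_zero_or_pos d with rfl | hd
    · simp
    have : (1 : ℝ) ≤ 4 * d * M := by
      nlinarith [show (1 : ℝ) ≤ d by exact_mod_cast hd]
    simpa using mul_nonneg (by positivity : (0 : ℝ) ≤ 2 * d) (logb_nonneg one_lt_two this)
  have hN1 : (1 : ℝ) ≤ N := by exact_mod_cast hN
  rcases Nat.eq_zero_or_pos d with rfl | hd
  · have : (2 : ℝ) ≤ 2 ^ N := le_self_pow₀ one_le_two hN.ne'
    norm_num at h; linarith
  refine le_two_mul_logb_of_le_mul_logb (by positivity) (by positivity) (by positivity) ?_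
  calc (N : ℝ) = logb 2 (2 ^ N) := by rw [logb_pow, logb_self_eq_one one_lt_two, mul_one]
    _ ≤ logb 2 ((N * M + 1) ^ d) := logb_le_logb_of_le one_lt_two (by positivity) h
    _ = d * logb 2 (N * M + 1) := logb_pow _ _ _
    _ ≤ d * logb 2 (2 * N * M) := by
        gcongr
        · exact one_lt_two
        · nlinarith

section EisenbrandShmonin

variable {α ι : Type*} (φ : α → ι → ℕ)

lemma exists_disjoint_sum_eq_of_card_lt [Fintype ι] {s : Finset α} {M : ℕ}
    (hφM : ∀ a ∈ s, ∀ i, φ a i ≤ M) (hs : (#s * M + 1) ^ Fintype.card ι < 2 ^ #s) :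
    ∃ A ⊆ s, ∃ A' ⊆ s, Disjoint A A' ∧ A.Nonempty ∧ ∑ a ∈ A, φ a = ∑ a ∈ A', φ a := by
  obtain ⟨S, hS, S', hS', hne, hsum⟩ : ∃ S ∈ s.powerset, ∃ S' ∈ s.powerset, S ≠ S' ∧
      ∑ a ∈ S, φ a = ∑ a ∈ S', φ a := by
    refine exists_ne_map_eq_of_card_lt_of_maps_to
      (t := Fintype.piFinset fun _ => range (#s * M + 1)) ?_ fun S hS => ?_
    · simpa [Fintype.card_piFinset] using hs
    · have hSs : S ⊆ s := mem_powerset.mp hS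
      simp only [Fintype.coe_piFinset, Set.mem_pi, Set.mem_univ, coe_range, Set.mem_Iio,
        Finset.sum_apply, forall_const]
      intro i
      calc ∑ a ∈ S, φ a i ≤ ∑ _a ∈ S, M := sum_le_sum fun a ha => hφM a (hSs ha) i
        _ ≤ #s * M := by rw [sum_const, smul_eq_mul]; gcongr
        _ < #s * M + 1 := Nat.lt_succ_self _
  rw [mem_powerset] at hS hS'
  rw [← sum_sdiff_eq_sum_sdiff_iff] at hsum
  rcases (S \ S').eq_empty_or_nonempty with h | h
  · refine ⟨S' \ S, sdiff_subset.trans hS', S \ S', sdiff_subset.trans hS,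
      disjoint_sdiff_sdiff, sdiff_nonempty.mpr fun h' => hne ?_, hsum.symm⟩
    exact Subset.antisymm (sdiff_eq_empty_iff_subset.mp h) h'
  · exact ⟨S \ S', sdiff_subset.trans hS, S' \ S, sdiff_subset.trans hS',
      disjoint_sdiff_sdiff, h, hsum⟩

lemma exists_support_ssubset_linearCombination_eq (f : α →₀ ℕ) {A A' : Finset α}
    (hA : A ⊆ f.support) (hA' : A' ⊆ f.support) (hdisj : Disjoint A A') (hne : A.Nonempty)
    (hsum : ∑ a ∈ A, φ a = ∑ a ∈ A', φ a) :
    ∃ g : α →₀ ℕ, g.support ⊂ f.support ∧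
      linearCombination ℕ φ g = linearCombination ℕ φ f := by
  obtain ⟨a₀, ha₀, hmin⟩ := A.exists_min_image f hne
  -- move `f a₀ = min_A f` units from each element of `A` to each element of `A'`
  set u : α →₀ ℕ := ∑ a ∈ A, single a (f a₀)
  set u' : α →₀ ℕ := ∑ a ∈ A', single a (f a₀)
  have hu : ∀ a, u a = if a ∈ A then f a₀ else 0 := fun a => by
    simp [u, finsetSum_apply, single_apply]
  have hu' : ∀ a, u' a = if a ∈ A' then f a₀ else 0 := fun a => by
    simp [u', finsetSum_apply, single_apply]
  have hu_le : u ≤ f := fun a => by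
    rw [hu]; split_ifs with h
    exacts [hmin a h, zero_le]
  have hlc : linearCombination ℕ φ u = linearCombination ℕ φ u' := by
    simp only [u, u', map_sum, linearCombination_single]
    rw [← Finset.smul_sum, ← Finset.smul_sum, hsum]
  refine ⟨f - u + u', (ssubset_iff_of_subset fun a ha => ?_).mpr ⟨a₀, hA ha₀, ?_⟩, ?_⟩
  · by_cases h : a ∈ A'
    · exact hA' h
    · rw [mem_support_iff, Finsupp.add_apply, tsub_apply, hu', if_neg h] at ha
      exact mem_support_iff.mpr fun h0 => ha (by rw [h0, zero_tsub, add_zero])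
  · have : a₀ ∉ A' := disjoint_left.mp hdisj ha₀
    simp [hu, hu', ha₀, this]
  · rw [map_add, ← hlc, ← map_add, tsub_add_cancel_of_le hu_le]

theorem exists_linearCombination_eq_two_pow_card_support_le [Fintype ι] (M : ℕ) (f : α →₀ ℕ)
    (hφM : ∀ a ∈ f.support, ∀ i, φ a i ≤ M) :
    ∃ g : α →₀ ℕ, g.support ⊆ f.support ∧
      linearCombination ℕ φ g = linearCombination ℕ φ f ∧
      2 ^ #g.support ≤ (#g.support * M + 1) ^ Fintype.card ι := by
  induction hn : #f.support using Nat.strong_induction_on generalizing f with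
  | _ n ih =>
  by_cases hstop : 2 ^ n ≤ (n * M + 1) ^ Fintype.card ι
  · exact ⟨f, subset_rfl, rfl, hn ▸ hstop⟩
  obtain ⟨A, hA, A', hA', hdisj, hne, hsum⟩ :=
    exists_disjoint_sum_eq_of_card_lt φ hφM (hn ▸ not_le.mp hstop)
  obtain ⟨g, hgf, hg⟩ := exists_support_ssubset_linearCombination_eq φ f hA hA' hdisj hne hsum
  obtain ⟨g', hg'g, hg', hcard⟩ :=
    ih _ (hn ▸ card_lt_card hgf) g (fun a ha => hφM a (hgf.subset ha)) rfl
  exact ⟨g', hg'g.trans hgf.subset, hg'.trans hg, hcard⟩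

theorem exists_linearCombination_eq_card_support_le_logb [Fintype ι] {M : ℝ} (hM : 1 ≤ M)
    (f : α →₀ ℕ) (hφM : ∀ a ∈ f.support, ∀ i, (φ a i : ℝ) ≤ M) :
    ∃ g : α →₀ ℕ, g.support ⊆ f.support ∧
      linearCombination ℕ φ g = linearCombination ℕ φ f ∧
      (#g.support : ℝ) ≤ 2 * Fintype.card ι * logb 2 (4 * Fintype.card ι * M) := by
  obtain ⟨g, hgf, hg, hcard⟩ := exists_linearCombination_eq_two_pow_card_support_le φ ⌊M⌋₊ f
    fun a ha i => Nat.le_floor (hφM a ha i)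
  refine ⟨g, hgf, hg, le_two_mul_logb_of_two_pow_le hM ?_⟩
  calc (2 : ℝ) ^ #g.support ≤ (#g.support * ⌊M⌋₊ + 1) ^ Fintype.card ι := by exact_mod_cast hcard
    _ ≤ (#g.support * M + 1) ^ Fintype.card ι := by
        gcongr
        exact Nat.floor_le (by linarith)

end EisenbrandShmonin

lemma finite_support_of_tsum_natCast_ne_top {α : Type*} {n : α → ℕ}
    (h : ∑' a, (n a : ℝ≥0∞) ≠ ⊤) : (Function.support n).Finite := by
  convert ENNReal.finite_const_le_of_tsum_ne_top h one_ne_zero using 1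
  ext a
  simp [Nat.one_le_iff_ne_zero]

lemma tsum_mul_natCast_eq_linearCombination {α ι : Type*} (φ : α → ι → ℕ) (f : α →₀ ℕ) (i : ι) :
    ∑' a, (φ a i : ℝ≥0∞) * f a = (linearCombination ℕ φ f i : ℝ≥0∞) := by
  rw [tsum_eq_sum (s := f.support) fun a ha => by simp [notMem_support_iff.mp ha],
    linearCombination_apply, Finsupp.sum, Finset.sum_apply, Nat.cast_sum]
  simp [mul_comm]

lemma tsum_confSize_mul (B : Finset ℝ≥0∞) (w : (ℝ≥0∞ → ℕ) → ℝ≥0∞) :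
    ∑' C, confSize B C * w C = ∑ v ∈ B, (∑' C, (C v : ℝ≥0∞) * w C) * v := by
  simp only [confSize, Finset.sum_mul]
  rw [Summable.tsum_finsetSum fun _ _ => ENNReal.summable]
  refine sum_congr rfl fun v _ => ?_
  rw [← ENNReal.tsum_mul_right]
  exact tsum_congr fun C => mul_right_comm _ _ _

lemma one_le_one_add_div_sq {ε : ℝ} (hε : 0 < ε) (hε1 : ε ≤ 1) : 1 ≤ (1 + ε) / ε ^ 2 := by
  rw [le_div_iff₀ (by positivity)]
  nlinarith

-- The constant coordinate accounts for constraint (1), the number of machines.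
def confVector (B : Finset ℝ≥0∞) (C : ℝ≥0∞ → ℕ) : Option B → ℕ
  | none => 1
  | Option.some v => C v

lemma IsConf.confVector_le {ε T : ℝ} (hε : 0 < ε) (hε1 : ε ≤ 1) (hT : 0 < T)
    {p : Fin K → J → ℝ≥0∞} {t : Fin K} {C : ℝ≥0∞ → ℕ} (hC : IsConf ε T (bigSet ε T p t) C)
    (i : Option (bigSet ε T p t)) : (confVector (bigSet ε T p t) C i : ℝ) ≤ (1 + ε) / ε ^ 2 := by
  rcases i with _ | ⟨v, hv⟩
  · simpa [confVector] using one_le_one_add_div_sq hε hε1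
  have hbig : ENNReal.ofReal (ε ^ 2 * T) < v := (mem_filter.mp hv).2.1
  have hfit : (C v : ℝ≥0∞) * ENNReal.ofReal (ε ^ 2 * T) ≤ ENNReal.ofReal ((1 + ε) * T) :=
    calc (C v : ℝ≥0∞) * ENNReal.ofReal (ε ^ 2 * T) ≤ C v * v := by gcongr
      _ ≤ confSize (bigSet ε T p t) C :=
          single_le_sum (f := fun u => (C u : ℝ≥0∞) * u) (fun _ _ => zero_le) hv
      _ ≤ _ := hC.2
  rw [← ENNReal.ofReal_natCast, ← ENNReal.ofReal_mul (by positivity),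
    ENNReal.ofReal_le_ofReal_iff (by positivity)] at hfit
  simp only [confVector]
  rw [le_div_iff₀ (by positivity)]
  nlinarith

lemma MILPFeasible.of_linearCombination_confVector_eq {ε T R : ℝ} {p : Fin K → J → ℝ≥0∞}
    {m : Fin K → ℕ} {z : (ℝ≥0∞ → ℕ) → Fin K → ℝ≥0∞} {x : J → Fin K → ℝ≥0∞}
    (hfeas : MILPFeasible ε T p m R z x) (f g : Fin K → (ℝ≥0∞ → ℕ) →₀ ℕ)
    (hzf : ∀ C t, z C t = f t C) (hgf : ∀ t, (g t).support ⊆ (f t).support)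
    (hlc : ∀ t, linearCombination ℕ (confVector (bigSet ε T p t)) (g t) =
      linearCombination ℕ (confVector (bigSet ε T p t)) (f t)) :
    MILPFeasible ε T p m R (fun C t => g t C) x := by
  obtain ⟨hconf, hx0, hm, hx1, hbig, hsize⟩ := hfeas
  have hmoment : ∀ t i, ∑' C, (confVector (bigSet ε T p t) C i : ℝ≥0∞) * g t C =
      ∑' C, (confVector (bigSet ε T p t) C i : ℝ≥0∞) * z C t := fun t i => by
    simp only [hzf, tsum_mul_natCast_eq_linearCombination, hlc]
  have hcoeff : ∀ t, ∀ v ∈ bigSet ε T p t,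
      ∑' C, (C v : ℝ≥0∞) * g t C = ∑' C, (C v : ℝ≥0∞) * z C t :=
    fun t v hv => hmoment t (Option.some ⟨v, hv⟩)
  refine ⟨fun C t hC => ?_, hx0, fun t => ?_, hx1,
    fun t v hv => (hbig t v hv).trans_eq (hcoeff t v hv).symm, fun t => ?_⟩
  · have : C ∉ (f t).support := by simpa [hzf] using hconf C t hC
    simpa using notMem_support_iff.mp fun h => this (hgf t h)
  · simpa [confVector, hm] using hmoment t none
  · rw [tsum_confSize_mul, sum_congr rfl fun v hv => by rw [hcoeff t v hv], ← tsum_confSize_mul]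
    exact hsize t

theorem MILP_few_nonzero_variables_general (ε T : ℝ) (hε : 0 < ε) (hε1 : ε ≤ 1) (hT : 0 < T)
    (p : Fin K → J → ℝ≥0∞) (m : Fin K → ℕ)
    (z : (ℝ≥0∞ → ℕ) → Fin K → ℝ≥0∞) (x : J → Fin K → ℝ≥0∞)
    (hfeas : MILPFeasible ε T p m ((1 + ε) * T) z x)
    (hint : ∀ C t, ∃ n : ℕ, z C t = n) :
    ∃ z' : (ℝ≥0∞ → ℕ) → Fin K → ℝ≥0∞,
      MILPFeasible ε T p m ((1 + ε) * T) z' x ∧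
      (∀ C t, ∃ n : ℕ, z' C t = n) ∧
      ∀ t, {C : ℝ≥0∞ → ℕ | z' C t ≠ 0}.Finite ∧
        (({C : ℝ≥0∞ → ℕ | z' C t ≠ 0}.ncard : ℝ) ≤
          2 * ((bigSet ε T p t).card + 1) *
            Real.logb 2 (4 * ((bigSet ε T p t).card + 1) * (1 + ε) / ε ^ 2)) := by
  choose n hn using hint
  have hfin : ∀ t, (Function.support fun C => n C t).Finite := fun t =>
    finite_support_of_tsum_natCast_ne_top (by simp [← hn, hfeas.2.2.1 t])
  set f : Fin K → (ℝ≥0∞ → ℕ) →₀ ℕ := fun t => ofSupportFinite _ (hfin t)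
  have hsparse : ∀ t, ∃ g : (ℝ≥0∞ → ℕ) →₀ ℕ, g.support ⊆ (f t).support ∧
      linearCombination ℕ (confVector (bigSet ε T p t)) g =
        linearCombination ℕ (confVector (bigSet ε T p t)) (f t) ∧
      (#g.support : ℝ) ≤ 2 * ((bigSet ε T p t).card + 1) *
        logb 2 (4 * ((bigSet ε T p t).card + 1) * ((1 + ε) / ε ^ 2)) := fun t => by
    have hconf : ∀ C ∈ (f t).support, IsConf ε T (bigSet ε T p t) C := fun C hC => by
      simp only [f, mem_support_iff, ofSupportFinite_coe] at hC
      by_contra h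
      exact hC (by exact_mod_cast (hn C t).symm.trans (hfeas.1 C t h))
    simpa using exists_linearCombination_eq_card_support_le_logb _
      (one_le_one_add_div_sq hε hε1) (f t) fun C hC => (hconf C hC).confVector_le hε hε1 hT
  choose g hgf hlc hcard using hsparse
  refine ⟨fun C t => g t C,
    hfeas.of_linearCombination_confVector_eq f g hn hgf hlc,
    fun C t => ⟨g t C, rfl⟩, fun t => ?_⟩
  have hsupp : {C | ((g t C : ℕ) : ℝ≥0∞) ≠ 0} = ↑(g t).support := by ext; simp
  rw [hsupp, Set.ncard_coe_finset, mul_div_assoc]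
  exact ⟨(g t).support.finite_toSet, hcard t⟩

/-- Existence of a feasible MILP solution with thin support: the same
`x`-variables, and for every machine type at most
`2(|B_t|+1)·log₂(4(|B_t|+1)(1+ε)/ε²)` non-zero configuration variables. -/
theorem MILP_few_nonzero_variables (ε T : ℝ) (hε : 0 < ε) (hε1 : ε ≤ 1) (hT : 0 < T)
    (p : Fin K → J → ℝ≥0∞) (hp : ∀ t j, p t j ≠ 0) (m : Fin K → ℕ)
    (z : (ℝ≥0∞ → ℕ) → Fin K → ℝ≥0∞) (x : J → Fin K → ℝ≥0∞)
    (hfeas : MILPFeasible ε T p m ((1 + ε) * T) z x)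
    (hint : ∀ C t, ∃ n : ℕ, z C t = n) :
    ∃ z' : (ℝ≥0∞ → ℕ) → Fin K → ℝ≥0∞,
      MILPFeasible ε T p m ((1 + ε) * T) z' x ∧
      (∀ C t, ∃ n : ℕ, z' C t = n) ∧
      ∀ t, {C : ℝ≥0∞ → ℕ | z' C t ≠ 0}.Finite ∧
        (({C : ℝ≥0∞ → ℕ | z' C t ≠ 0}.ncard : ℝ) ≤
          2 * ((bigSet ε T p t).card + 1) *
            Real.logb 2 (4 * ((bigSet ε T p t).card + 1) * (1 + ε) / ε ^ 2)) :=
  MILP_few_nonzero_variables_general ε T hε hε1 hT p m z x hfeas hint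
end
end

section
/- Let 0 < ε ≤ 1 and T = 1/ε³. Let p be processing times and p̄ geometrically rounded processing times satisfying p_{t,j} ≤ p̄_{t,j} ≤ (1+ε)·p_{t,j} for all t, j, where each finite p̄_{t,j} has the form (1+ε)^x·ε²T = (1+ε)^x/ε for an integer x. Define p̆_{t,j} = ⌈p̄_{t,j}⌉ if p̄_{t,j} > ε²T (big) and p̆_{t,j} = p̄_{t,j} otherwise. Then: (i) every schedule with makespan at most T with respect to p has makespan at most (1 + 2ε + ε²)·T with respect to p̆; and (ii) for every schedule, the makespan with respect to p is at most the makespan with respect to p̆. -/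
open Finset
open scoped Classical

/-- The second rounding step (rounding big processing times up to the
next integer, for `T = 1/ε³`) increases the makespan from `T` to at most
`(1 + 2ε + ε²)·T`, and makespans never decrease under the rounding. -/
theorem second_rounding_step {J M : Type*} [Fintype J] [Fintype M]
    {K : ℕ} (mt : M → Fin K)
    (ε : ℝ) (hε : 0 < ε) (hε1 : ε ≤ 1)
    (p pbar : Fin K → J → ℝ)
    (hp : ∀ t j, 0 ≤ p t j)
    (hround : ∀ t j, p t j ≤ pbar t j ∧ pbar t j ≤ (1 + ε) * p t j)
    (hform : ∀ t j, ∃ x : ℤ, pbar t j = (1 + ε) ^ x / ε)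
    (pbrev : Fin K → J → ℝ)
    (hbrev : ∀ t j, pbrev t j =
      if ε ^ 2 * (1 / ε ^ 3) < pbar t j then (⌈pbar t j⌉ : ℝ) else pbar t j) :
    (∀ σ : J → M,
      (⨆ i, ∑ j ∈ univ.filter (fun j => σ j = i), p (mt i) j) ≤ 1 / ε ^ 3 →
      (⨆ i, ∑ j ∈ univ.filter (fun j => σ j = i), pbrev (mt i) j) ≤
        (1 + 2 * ε + ε ^ 2) * (1 / ε ^ 3)) ∧
    (∀ σ : J → M,
      (⨆ i, ∑ j ∈ univ.filter (fun j => σ j = i), p (mt i) j) ≤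
        ⨆ i, ∑ j ∈ univ.filter (fun j => σ j = i), pbrev (mt i) j) := by
  have hT : (0:ℝ) < 1 / ε ^ 3 := by positivity
  have key : ∀ t j, p t j ≤ pbrev t j ∧ pbrev t j ≤ (1 + 2 * ε + ε ^ 2) * p t j := by
    intro t j
    obtain ⟨h1, h2⟩ := hround t j
    have hp0 := hp t j
    rw [hbrev t j]
    split_ifs with hb
    · refine ⟨le_trans h1 (Int.le_ceil _), ?_⟩
      have hceil : (⌈pbar t j⌉ : ℝ) < pbar t j + 1 := Int.ceil_lt_add_one _
      have hbig : 1 / ε < pbar t j := by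
        have he : ε ^ 2 * (1 / ε ^ 3) = 1 / ε := by field_simp
        linarith [he ▸ hb]
      have h1e : 1 ≤ ε * pbar t j := by
        rw [div_lt_iff₀ hε] at hbig
        nlinarith
      nlinarith [mul_le_mul_of_nonneg_left h2 (by linarith : (0:ℝ) ≤ 1 + ε)]
    · exact ⟨h1, by nlinarith⟩
  have hsum : ∀ (σ : J → M) (i : M),
      (∑ j ∈ univ.filter (fun j => σ j = i), p (mt i) j) ≤
        ∑ j ∈ univ.filter (fun j => σ j = i), pbrev (mt i) j :=
    fun σ i => Finset.sum_le_sum fun j _ => (key (mt i) j).1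
  have hsum2 : ∀ (σ : J → M) (i : M),
      (∑ j ∈ univ.filter (fun j => σ j = i), pbrev (mt i) j) ≤
        (1 + 2 * ε + ε ^ 2) * ∑ j ∈ univ.filter (fun j => σ j = i), p (mt i) j := by
    intro σ i
    rw [Finset.mul_sum]
    exact Finset.sum_le_sum fun j _ => (key (mt i) j).2
  constructor
  · intro σ h
    refine Real.iSup_le (fun i => ?_) (by positivity)
    have hpi : (∑ j ∈ univ.filter (fun j => σ j = i), p (mt i) j) ≤ 1 / ε ^ 3 :=
      le_trans (le_ciSup (f := fun i => ∑ j ∈ univ.filter (fun j => σ j = i), p (mt i) j) (Set.Finite.bddAbove (Set.finite_range _)) i) h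
    have := hsum2 σ i
    nlinarith [sq_nonneg ε]
  · intro σ
    refine Real.iSup_le (fun i => ?_) ?_
    · exact le_trans (hsum σ i)
        (le_ciSup (f := fun i => ∑ j ∈ univ.filter (fun j => σ j = i), pbrev (mt i) j) (Set.Finite.bddAbove (Set.finite_range _)) i)
    · exact Real.iSup_nonneg fun i =>
        Finset.sum_nonneg fun j _ => le_trans (hp (mt i) j) (key (mt i) j).1
end

section
/- Let 𝒥 be a finite set, K ∈ ℕ, sizes p_{t,j} ∈ ℝ for each t ∈ {1,…,K} and j ∈ 𝒥, and let x : 𝒥 × {1,…,K} → [0,1] satisfy ∑_t x_{j,t} = 1 for every j. Then there exists a map τ : 𝒥 → {1,…,K} such that for every type t and every value v, |{j ∈ 𝒥 : τ(j) = t and p_{t,j} = v}| ≥ ⌊∑_{j : p_{t,j} = v} x_{j,t}⌋. -/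
/-!
Give each pair `(t, v)` of a type and a value `⌊∑_{p t j = v} x j t⌋` slots, a slot of `(t, v)`
accepting exactly the jobs `j` with `p t j = v`. The fractional assignment yields Hall's condition
for slots versus jobs: the slots over a set `B` of pairs number at most
`∑_{(t, v) ∈ B} ∑_{p t j = v} x j t`, and each job contributes at most `∑_t x j t = 1` to this,
since for each `t` it is adjacent only to the pair `(t, p t j)`. A matching saturating all slots,
with the unmatched jobs assigned arbitrarily, is the rounding.
-/

open Finset
open scoped Classical

section FractionalRounding

variable {α β : Type*} [Fintype α] (y : β → α → ℝ) (d : β → ℕ)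

theorem card_le_card_biUnion_support
    (hrow : ∀ b, (d b : ℝ) ≤ ∑ a, y b a) (hcol : ∀ a (B : Finset β), ∑ b ∈ B, y b a ≤ 1)
    (s : Finset (Σ b, Fin (d b))) :
    #s ≤ #(s.biUnion fun σ => {a | y σ.1 a ≠ 0}) := by
  set B := s.image Sigma.fst
  set N := s.biUnion fun σ => {a | y σ.1 a ≠ 0}
  have hs : #s ≤ ∑ b ∈ B, d b := by
    calc #s ≤ #(B.sigma fun b => (univ : Finset (Fin (d b)))) :=
          card_le_card fun σ hσ => mem_sigma.2 ⟨mem_image_of_mem _ hσ, mem_univ _⟩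
      _ = ∑ b ∈ B, d b := by simp [card_sigma]
  have hsupport : ∀ b ∈ B, ∑ a ∈ N, y b a = ∑ a, y b a := by
    intro b hb
    obtain ⟨σ, hσ, rfl⟩ := mem_image.1 hb
    refine sum_subset (subset_univ N) fun a _ ha => ?_
    by_contra hne
    exact ha (mem_biUnion.2 ⟨σ, hσ, by simpa using hne⟩)
  have hB : ((∑ b ∈ B, d b : ℕ) : ℝ) ≤ #N := by
    calc ((∑ b ∈ B, d b : ℕ) : ℝ) ≤ ∑ b ∈ B, ∑ a, y b a := by
          push_cast
          exact sum_le_sum fun b _ => hrow b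
      _ = ∑ a ∈ N, ∑ b ∈ B, y b a := by rw [← sum_congr rfl hsupport, sum_comm]
      _ ≤ ∑ a ∈ N, 1 := sum_le_sum fun a _ => hcol a B
      _ = #N := by simp
  exact hs.trans (by exact_mod_cast hB)

theorem exists_injective_slot_matching
    (hrow : ∀ b, (d b : ℝ) ≤ ∑ a, y b a) (hcol : ∀ a (B : Finset β), ∑ b ∈ B, y b a ≤ 1) :
    ∃ g : (Σ b, Fin (d b)) → α, Function.Injective g ∧ ∀ σ, y σ.1 (g σ) ≠ 0 := by
  obtain ⟨g, hg, hgy⟩ := (all_card_le_biUnion_card_iff_exists_injective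
    fun σ : Σ b, Fin (d b) => ({a | y σ.1 a ≠ 0} : Finset α)).1
    (card_le_card_biUnion_support y d hrow hcol)
  exact ⟨g, hg, fun σ => (mem_filter.1 (hgy σ)).2⟩

theorem exists_assignment_of_fractional [DecidableEq β] [Nonempty β]
    (hrow : ∀ b, (d b : ℝ) ≤ ∑ a, y b a) (hcol : ∀ a (B : Finset β), ∑ b ∈ B, y b a ≤ 1) :
    ∃ c : α → β, ∀ b, d b ≤ #{a | c a = b ∧ y b a ≠ 0} := by
  obtain ⟨g, hg, hgy⟩ := exists_injective_slot_matching y d hrow hcol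
  refine ⟨Function.extend g Sigma.fst fun _ => Classical.arbitrary β, fun b => ?_⟩
  calc d b = #(univ : Finset (Fin (d b))) := by simp
    _ ≤ _ := card_le_card_of_injOn (fun i => g ⟨b, i⟩)
        (fun i _ => mem_filter.2 ⟨mem_univ _, hg.extend_apply _ _ ⟨b, i⟩, hgy ⟨b, i⟩⟩)
        (fun i _ i' _ h => by simpa using hg h)

end FractionalRounding

theorem sum_ite_eq_value_le_sum {T J V : Type*} [Fintype T] (p : T → J → V) (x : J → T → ℝ)
    (hx0 : ∀ j t, 0 ≤ x j t) (j : J) (B : Finset (T × V)) :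
    ∑ b ∈ B, (if p b.1 j = b.2 then x j b.1 else 0) ≤ ∑ t, x j t := by
  calc ∑ b ∈ B, (if p b.1 j = b.2 then x j b.1 else 0)
        = ∑ b ∈ B with p b.1 j = b.2, x j b.1 := (sum_filter _ _).symm
    _ ≤ ∑ b ∈ univ.image fun t => (t, p t j), x j b.1 :=
        sum_le_sum_of_subset_of_nonneg
          (fun b hb => mem_image.2 ⟨b.1, mem_univ _, Prod.ext rfl (mem_filter.1 hb).2⟩)
          (fun b _ _ => hx0 j b.1)
    _ = ∑ t, x j t := sum_image fun t _ t' _ h => congrArg Prod.fst h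

theorem santa_fractional_assignment_rounding_general {J : Type*} [Fintype J] (K : ℕ)
    (p : Fin K → J → ℝ)
    (x : J → Fin K → ℝ)
    (hx0 : ∀ j t, 0 ≤ x j t)
    (hsum : ∀ j, ∑ t, x j t = 1) :
    ∃ τ : J → Fin K,
      ∀ (t : Fin K) (v : ℝ),
        ⌊∑ j ∈ univ.filter (fun j => p t j = v), x j t⌋ ≤
          ((univ.filter fun j => τ j = t ∧ p t j = v).card : ℤ) := by
  rcases isEmpty_or_nonempty J with _ | ⟨⟨j₀⟩⟩
  · exact ⟨isEmptyElim, fun t v => by simp⟩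
  obtain ⟨t₀, -, -⟩ := exists_ne_zero_of_sum_ne_zero ((hsum j₀).symm ▸ one_ne_zero)
  have : Nonempty (Fin K × ℝ) := ⟨(t₀, 0)⟩
  have hS : ∀ t v, 0 ≤ ∑ j ∈ univ.filter (fun j => p t j = v), x j t :=
    fun t v => sum_nonneg fun j _ => hx0 j t
  obtain ⟨c, hc⟩ := exists_assignment_of_fractional
    (fun b j => if p b.1 j = b.2 then x j b.1 else 0)
    (fun b => ⌊∑ j ∈ univ.filter (fun j => p b.1 j = b.2), x j b.1⌋₊)
    (fun b => by simpa only [sum_filter] using Nat.floor_le (hS b.1 b.2))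
    (fun j B => (sum_ite_eq_value_le_sum p x hx0 j B).trans (hsum j).le)
  refine ⟨fun j => (c j).1, fun t v => ?_⟩
  rw [← Int.natCast_floor_eq_floor (hS t v)]
  refine Int.ofNat_le.2 ((hc (t, v)).trans (card_le_card fun j hj => ?_))
  obtain ⟨-, hcj, hpj⟩ := mem_filter.1 hj
  exact mem_filter.2 ⟨mem_univ j, congrArg Prod.fst hcj, of_not_not fun h => hpj (if_neg h)⟩

/-- Rounding the fractional job-assignment variables for the Santa
Claus problem: every type receives, for each value, at least the rounded-down fractional
number of jobs of that value. -/
theorem santa_fractional_assignment_rounding {J : Type*} [Fintype J] (K : ℕ)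
    (p : Fin K → J → ℝ)
    (x : J → Fin K → ℝ)
    (hx0 : ∀ j t, 0 ≤ x j t) (hx1 : ∀ j t, x j t ≤ 1)
    (hsum : ∀ j, ∑ t, x j t = 1) :
    ∃ τ : J → Fin K,
      ∀ (t : Fin K) (v : ℝ),
        ⌊∑ j ∈ univ.filter (fun j => p t j = v), x j t⌋ ≤
          ((univ.filter fun j => τ j = t ∧ p t j = v).card : ℤ) :=
  santa_fractional_assignment_rounding_general K p x hx0 hsum
end

section
/- Fix ε > 0 and T > 0. For an instance of unrelated scheduling with K uniform machine types, let s^{(t)}_max denote the maximum speed among machines of type t, and assume 0 < p_{t,j} ≤ T·s^{(t)}_max for all t, j. Define rounded sizes p̄_{t,j} = ε²T·s^{(t)}_max·(1+ε)^{⌈log_{1+ε}(p_{t,j}/(ε²T·s^{(t)}_max))⌉} and rounded speeds s̄_i = s^{(t_i)}_max/(1+ε)^{⌈log_{1+ε}(s^{(t_i)}_max/s_i)⌉}. Then: (i) every schedule with makespan at most T with respect to (p, s) has makespan at most (1+ε)²·T with respect to (p̄, s̄); and (ii) for every schedule, the makespan with respect to (p, s) is at most the makespan with respect to (p̄, s̄).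 -/
/-!
Rounding a size up to the grid `c * (1 + ε) ^ ℤ` multiplies it by a factor in `[1, 1 + ε)`, and
rounding a speed down to the grid `smax * (1 + ε) ^ ℤ` divides it by a factor in `[1, 1 + ε)`.
Hence every processing time `p / s` grows by a factor between `1` and `(1 + ε) ^ 2`, and
makespans, being suprema of sums of processing times, inherit both bounds.
-/

open Finset
open scoped Classical

section GeometricRounding

variable {b c x : ℝ}

theorem le_zpow_ceil_logb (hb : 1 < b) (hx : 0 < x) : x ≤ b ^ ⌈Real.logb b x⌉ := by
  rw [← Real.rpow_intCast]
  exact (Real.logb_le_iff_le_rpow hb hx).1 (Int.le_ceil _)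

theorem zpow_ceil_logb_lt (hb : 1 < b) (hx : 0 < x) :
    b ^ ⌈Real.logb b x⌉ < b * x := by
  have h : b ^ (⌈Real.logb b x⌉ - 1) < x := by
    rw [← Real.rpow_intCast, Int.cast_sub, Int.cast_one]
    exact (Real.lt_logb_iff_rpow_lt hb hx).1 (by linarith [Int.ceil_lt_add_one (Real.logb b x)])
  rwa [zpow_sub_one₀ (by positivity), ← div_eq_mul_inv, div_lt_iff₀ (by positivity), mul_comm] at h

theorem le_mul_zpow_ceil_logb_div (hb : 1 < b) (hc : 0 < c) (hx : 0 < x) :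
    x ≤ c * b ^ ⌈Real.logb b (x / c)⌉ := by
  have := le_zpow_ceil_logb hb (div_pos hx hc)
  rwa [div_le_iff₀ hc, mul_comm] at this

theorem mul_zpow_ceil_logb_div_le (hb : 1 < b) (hc : 0 < c) (hx : 0 < x) :
    c * b ^ ⌈Real.logb b (x / c)⌉ ≤ b * x := by
  have := zpow_ceil_logb_lt hb (div_pos hx hc)
  rw [mul_div_assoc', lt_div_iff₀ hc, mul_comm] at this
  exact this.le

theorem div_zpow_ceil_logb_div_le (hb : 1 < b) (hc : 0 < c) (hx : 0 < x) :
    c / b ^ ⌈Real.logb b (c / x)⌉ ≤ x := by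
  have := le_zpow_ceil_logb hb (div_pos hc hx)
  rwa [div_le_iff₀ hx, ← div_le_iff₀' (by positivity)] at this

theorem div_le_div_zpow_ceil_logb_div (hb : 1 < b) (hc : 0 < c) (hx : 0 < x) :
    x / b ≤ c / b ^ ⌈Real.logb b (c / x)⌉ := by
  have := zpow_ceil_logb_lt hb (div_pos hc hx)
  rw [mul_div_assoc', lt_div_iff₀ hx] at this
  rw [div_le_div_iff₀ (by linarith) (by positivity), mul_comm c, mul_comm x]
  exact this.le

end GeometricRounding

theorem div_le_sq_mul_div {b p s p' s' : ℝ} (hb : 0 < b) (hp : 0 ≤ p) (hs : 0 < s)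
    (hp' : p' ≤ b * p) (hs' : s / b ≤ s') : p' / s' ≤ b ^ 2 * (p / s) :=
  calc p' / s' ≤ b * p / (s / b) := div_le_div₀ (by positivity) hp' (by positivity) hs'
    _ = b ^ 2 * (p / s) := by field_simp

section Makespan

variable {J M : Type*} [Fintype J]

noncomputable def makespan (σ : J → M) (q : M → J → ℝ) : ℝ :=
  ⨆ i, ∑ j ∈ univ.filter (fun j => σ j = i), q i j

theorem makespan_mono [Finite M] (σ : J → M) {q r : M → J → ℝ} (h : ∀ i j, q i j ≤ r i j) :
    makespan σ q ≤ makespan σ r :=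
  ciSup_mono (Set.finite_range _).bddAbove fun i => sum_le_sum fun j _ => h i j

theorem makespan_const_mul (σ : J → M) {a : ℝ} (ha : 0 ≤ a) (q : M → J → ℝ) :
    makespan σ (fun i j => a * q i j) = a * makespan σ q := by
  simp only [makespan, ← mul_sum, Real.mul_iSup_of_nonneg ha]

end Makespan

theorem uniform_types_rounding_general {J M : Type*} [Fintype J] [Fintype M]
    {K : ℕ} (mt : M → Fin K) (s : M → ℝ) (hs : ∀ i, 0 < s i)
    (ε T : ℝ) (hε : 0 < ε) (hT : 0 < T)
    (smax : Fin K → ℝ)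
    (hsmax_le : ∀ i, s i ≤ smax (mt i))
    (p : Fin K → J → ℝ) (hp : ∀ t j, 0 < p t j ∧ p t j ≤ T * smax t)
    (pbar : Fin K → J → ℝ) (sbar : M → ℝ)
    (hpbar : ∀ t j, pbar t j = ε ^ 2 * T * smax t *
      (1 + ε) ^ ⌈Real.logb (1 + ε) (p t j / (ε ^ 2 * T * smax t))⌉)
    (hsbar : ∀ i, sbar i =
      smax (mt i) / (1 + ε) ^ ⌈Real.logb (1 + ε) (smax (mt i) / s i)⌉) :
    (∀ σ : J → M,
      (⨆ i, ∑ j ∈ univ.filter (fun j => σ j = i), p (mt i) j / s i) ≤ T →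
      (⨆ i, ∑ j ∈ univ.filter (fun j => σ j = i), pbar (mt i) j / sbar i) ≤
        (1 + ε) ^ 2 * T) ∧
    (∀ σ : J → M,
      (⨆ i, ∑ j ∈ univ.filter (fun j => σ j = i), p (mt i) j / s i) ≤
        ⨆ i, ∑ j ∈ univ.filter (fun j => σ j = i), pbar (mt i) j / sbar i) := by
  have hb : 1 < 1 + ε := by linarith
  have hsmax : ∀ i, 0 < smax (mt i) := fun i => (hs i).trans_le (hsmax_le i)
  have hpbar_bounds :
      ∀ i j, p (mt i) j ≤ pbar (mt i) j ∧ pbar (mt i) j ≤ (1 + ε) * p (mt i) j := fun i j => by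
    have hc : 0 < ε ^ 2 * T * smax (mt i) := by have := hsmax i; positivity
    rw [hpbar]
    exact ⟨le_mul_zpow_ceil_logb_div hb hc (hp _ j).1, mul_zpow_ceil_logb_div_le hb hc (hp _ j).1⟩
  have hsbar_bounds : ∀ i, s i / (1 + ε) ≤ sbar i ∧ sbar i ≤ s i := fun i => by
    rw [hsbar]
    exact ⟨div_le_div_zpow_ceil_logb_div hb (hsmax i) (hs i),
      div_zpow_ceil_logb_div_le hb (hsmax i) (hs i)⟩
  have hsbar_pos : ∀ i, 0 < sbar i := fun i =>
    (div_pos (hs i) (by positivity)).trans_le (hsbar_bounds i).1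
  have hterm_le : ∀ i j, p (mt i) j / s i ≤ pbar (mt i) j / sbar i := fun i j =>
    div_le_div₀ ((hp _ j).1.trans_le (hpbar_bounds i j).1).le (hpbar_bounds i j).1
      (hsbar_pos i) (hsbar_bounds i).2
  have hterm_ge : ∀ i j, pbar (mt i) j / sbar i ≤ (1 + ε) ^ 2 * (p (mt i) j / s i) := fun i j =>
    div_le_sq_mul_div (by positivity) (hp _ j).1.le (hs i) (hpbar_bounds i j).2 (hsbar_bounds i).1
  refine ⟨fun σ hσ => ?_, fun σ => makespan_mono σ hterm_le⟩
  calc makespan σ (fun i j => pbar (mt i) j / sbar i)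
      ≤ makespan σ (fun i j => (1 + ε) ^ 2 * (p (mt i) j / s i)) := makespan_mono σ hterm_ge
    _ = (1 + ε) ^ 2 * makespan σ (fun i j => p (mt i) j / s i) :=
        makespan_const_mul σ (by positivity) _
    _ ≤ (1 + ε) ^ 2 * T := by gcongr; exact hσ

/-- Geometric rounding of job sizes and machine speeds for unrelated
scheduling with uniform machine types. -/
theorem uniform_types_rounding {J M : Type*} [Fintype J] [Fintype M]
    {K : ℕ} (mt : M → Fin K) (s : M → ℝ) (hs : ∀ i, 0 < s i)
    (ε T : ℝ) (hε : 0 < ε) (hT : 0 < T)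
    (smax : Fin K → ℝ)
    (hsmax_le : ∀ i, s i ≤ smax (mt i))
    (hsmax_mem : ∀ t, ∃ i, mt i = t ∧ s i = smax t)
    (p : Fin K → J → ℝ) (hp : ∀ t j, 0 < p t j ∧ p t j ≤ T * smax t)
    (pbar : Fin K → J → ℝ) (sbar : M → ℝ)
    (hpbar : ∀ t j, pbar t j = ε ^ 2 * T * smax t *
      (1 + ε) ^ ⌈Real.logb (1 + ε) (p t j / (ε ^ 2 * T * smax t))⌉)
    (hsbar : ∀ i, sbar i =
      smax (mt i) / (1 + ε) ^ ⌈Real.logb (1 + ε) (smax (mt i) / s i)⌉) :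
    (∀ σ : J → M,
      (⨆ i, ∑ j ∈ univ.filter (fun j => σ j = i), p (mt i) j / s i) ≤ T →
      (⨆ i, ∑ j ∈ univ.filter (fun j => σ j = i), pbar (mt i) j / sbar i) ≤
        (1 + ε) ^ 2 * T) ∧
    (∀ σ : J → M,
      (⨆ i, ∑ j ∈ univ.filter (fun j => σ j = i), p (mt i) j / s i) ≤
        ⨆ i, ∑ j ∈ univ.filter (fun j => σ j = i), pbar (mt i) j / sbar i) :=
  uniform_types_rounding_general mt s hs ε T hε hT smax hsmax_le p hp pbar sbar hpbar hsbar
end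

section
/- Let P be a finite set of positive reals and S a finite index set, and let y : P × S → ℝ≥0 be such that k_p := ∑_{s∈S} y_{p,s} is a nonnegative integer for every p ∈ P. Then there exists ŷ : P × S → ℕ with ∑_{s∈S} ŷ_{p,s} = k_p for every p ∈ P and such that for every s ∈ S, ∑_{p∈P} p·ŷ_{p,s} ≤ ∑_{p∈P} p·y_{p,s} + max({p ∈ P : y_{p,s} > 0} ∪ {0}). -/
open Finset
open scoped Classical

noncomputable section JobRounding

/-- clamp of `x` to the slot `(r, r+1]`, measured from `r`. -/
def uclamp (r : ℕ) (x : ℝ) : ℝ := min 1 (max 0 (x - r))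

lemma uclamp_nonneg (r : ℕ) (x : ℝ) : 0 ≤ uclamp r x :=
  le_min zero_le_one (le_max_left _ _)

lemma uclamp_le_one (r : ℕ) (x : ℝ) : uclamp r x ≤ 1 := min_le_left _ _

lemma uclamp_mono (r : ℕ) {x z : ℝ} (h : x ≤ z) : uclamp r x ≤ uclamp r z :=
  min_le_min le_rfl (max_le_max le_rfl (by linarith))

lemma uclamp_of_le {r : ℕ} {x : ℝ} (h : x ≤ r) : uclamp r x = 0 := by
  unfold uclamp
  rw [max_eq_left (by linarith), min_eq_right (by norm_num)]

lemma uclamp_of_ge {r : ℕ} {x : ℝ} (h : (r : ℝ) + 1 ≤ x) : uclamp r x = 1 := by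
  unfold uclamp
  rw [max_eq_right (by linarith), min_eq_left (by linarith)]

lemma uclamp_zero (r : ℕ) : uclamp r 0 = 0 := uclamp_of_le (by positivity)

lemma sum_uclamp_of_ge (K : ℕ) {x : ℝ} (h : (K : ℝ) ≤ x) :
    ∑ r ∈ Finset.range K, uclamp r x = K := by
  rw [Finset.sum_congr rfl (fun r hr => uclamp_of_ge ?_), Finset.sum_const,
    Finset.card_range, nsmul_eq_mul, mul_one]
  have : (r : ℝ) + 1 ≤ K := by
    have := Finset.mem_range.mp hr
    exact_mod_cast Nat.succ_le_of_lt this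
  linarith

lemma sum_uclamp (K : ℕ) {x : ℝ} (h0 : 0 ≤ x) (hK : x ≤ K) :
    ∑ r ∈ Finset.range K, uclamp r x = x := by
  induction K with
  | zero => simpa using (le_antisymm (by exact_mod_cast hK) h0).symm
  | succ K ih =>
    rw [Finset.sum_range_succ]
    rcases le_or_gt x K with hle | hlt
    · rw [ih hle, uclamp_of_le hle, add_zero]
    · rw [sum_uclamp_of_ge K hlt.le]
      have hx1 : x - K ≤ 1 := by
        push_cast at hK ⊢; linarith
      unfold uclamp
      rw [max_eq_right (by linarith), min_eq_right hx1]
      ring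

/-- Telescoping over a finite set of reals. -/
lemma telescope_filter_sum (F : ℝ → ℝ) (g : ℝ → ℝ) (Q : Finset ℝ) :
    ∑ p ∈ Q, (F (∑ q ∈ Q.filter (fun q => p ≤ q), g q)
      - F (∑ q ∈ Q.filter (fun q => p < q), g q))
      = F (∑ q ∈ Q, g q) - F 0 := by
  induction Q using Finset.strongInduction with
  | _ Q ih =>
    rcases Q.eq_empty_or_nonempty with rfl | hQ
    · simp
    · set m := Q.min' hQ with hm
      have hmQ : m ∈ Q := Q.min'_mem hQ
      rw [← Finset.add_sum_erase _ _ hmQ]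
      have h1 : Q.filter (fun q => m ≤ q) = Q := by
        apply Finset.filter_true_of_mem
        intro q hq; exact Q.min'_le q hq
      have h2 : Q.filter (fun q => m < q) = Q.erase m := by
        ext q
        simp only [Finset.mem_filter, Finset.mem_erase]
        constructor
        · rintro ⟨hq, hlt⟩; exact ⟨ne_of_gt hlt, hq⟩
        · rintro ⟨hne, hq⟩; exact ⟨hq, lt_of_le_of_ne (Q.min'_le q hq) (Ne.symm hne)⟩
      have h3 : ∀ p ∈ Q.erase m,
          (F (∑ q ∈ Q.filter (fun q => p ≤ q), g q)
            - F (∑ q ∈ Q.filter (fun q => p < q), g q))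
          = (F (∑ q ∈ (Q.erase m).filter (fun q => p ≤ q), g q)
            - F (∑ q ∈ (Q.erase m).filter (fun q => p < q), g q)) := by
        intro p hp
        have hmp : m < p := lt_of_le_of_ne (Q.min'_le p (Finset.mem_of_mem_erase hp))
          (Ne.symm (Finset.ne_of_mem_erase hp))
        have e1 : Q.filter (fun q => p ≤ q) = (Q.erase m).filter (fun q => p ≤ q) := by
          ext q
          simp only [Finset.mem_filter, Finset.mem_erase]
          constructor
          · rintro ⟨hq, hpq⟩; exact ⟨⟨by rintro rfl; linarith, hq⟩, hpq⟩
          · rintro ⟨⟨_, hq⟩, hpq⟩; exact ⟨hq, hpq⟩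
        have e2 : Q.filter (fun q => p < q) = (Q.erase m).filter (fun q => p < q) := by
          ext q
          simp only [Finset.mem_filter, Finset.mem_erase]
          constructor
          · rintro ⟨hq, hpq⟩; exact ⟨⟨by rintro rfl; linarith, hq⟩, hpq⟩
          · rintro ⟨⟨_, hq⟩, hpq⟩; exact ⟨hq, hpq⟩
        rw [e1, e2]
      rw [Finset.sum_congr rfl h3, ih (Q.erase m) (Finset.erase_ssubset hmQ), h1, h2]
      ring

section Defs

variable {ι : Type*} [Fintype ι]

/-- cumulative mass strictly above `p` in column `s`. -/
def aF (P : Finset ℝ) (y : ℝ → ι → ℝ) (p : ℝ) (s : ι) : ℝ :=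
  ∑ q ∈ P.filter (fun q => p < q), y q s

/-- cumulative mass at least `p` in column `s`. -/
def bF (P : Finset ℝ) (y : ℝ → ι → ℝ) (p : ℝ) (s : ι) : ℝ :=
  ∑ q ∈ P.filter (fun q => p ≤ q), y q s

variable {P : Finset ℝ} {y : ℝ → ι → ℝ}

lemma bF_eq {p : ℝ} (hpP : p ∈ P) (s : ι) :
    bF P y p s = aF P y p s + y p s := by
  unfold aF bF
  have hins : P.filter (fun q => p ≤ q) = insert p (P.filter (fun q => p < q)) := by
    ext q
    simp only [Finset.mem_filter, Finset.mem_insert]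
    constructor
    · rintro ⟨hq, hle⟩
      rcases lt_or_eq_of_le hle with hlt | heq
      · exact Or.inr ⟨hq, hlt⟩
      · exact Or.inl heq.symm
    · rintro (rfl | ⟨hq, hlt⟩)
      · exact ⟨hpP, le_rfl⟩
      · exact ⟨hq, hlt.le⟩
  rw [hins, Finset.sum_insert (by simp)]
  ring

lemma aF_nonneg (hy : ∀ p ∈ P, ∀ s, 0 ≤ y p s) (p : ℝ) (s : ι) : 0 ≤ aF P y p s :=
  Finset.sum_nonneg fun q hq => hy q (Finset.mem_of_mem_filter q hq) s

lemma aF_le_bF (hy : ∀ p ∈ P, ∀ s, 0 ≤ y p s) (p : ℝ) (s : ι) :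
    aF P y p s ≤ bF P y p s := by
  apply Finset.sum_le_sum_of_subset_of_nonneg
  · intro q hq
    simp only [Finset.mem_filter] at hq ⊢
    exact ⟨hq.1, hq.2.le⟩
  · intro q hq _; exact hy q (Finset.mem_of_mem_filter q hq) s

lemma bF_le_col (hy : ∀ p ∈ P, ∀ s, 0 ≤ y p s) (p : ℝ) (s : ι) :
    bF P y p s ≤ ∑ q ∈ P, y q s :=
  Finset.sum_le_sum_of_subset_of_nonneg (Finset.filter_subset _ _)
    (fun q hq _ => hy q hq s)

/-- positivity of a slot overlap forces the intersection conditions. -/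
lemma ov_pos_conds {r : ℕ} {A B : ℝ} (hAB : A ≤ B) (hA : 0 ≤ A)
    (h : 0 < uclamp r B - uclamp r A) :
    A < B ∧ (r : ℝ) < B ∧ A < r + 1 := by
  refine ⟨?_, ?_, ?_⟩
  · by_contra hc
    push_neg at hc
    have : A = B := le_antisymm hAB hc
    rw [this] at h; linarith
  · by_contra hc
    push_neg at hc
    have hB0 : uclamp r B = 0 := uclamp_of_le hc
    have := uclamp_nonneg r A
    linarith
  · by_contra hc
    push_neg at hc
    have hA1 : uclamp r A = 1 := uclamp_of_ge hc
    have := uclamp_le_one r B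
    linarith

/-- per-row: summing the overlaps over all slots recovers `y p s`. -/
lemma sum_ov_row (hy : ∀ p ∈ P, ∀ s, 0 ≤ y p s) {K : ℕ}
    (hCK : ∀ s, ∑ q ∈ P, y q s ≤ (K : ℝ)) {p : ℝ} (hpP : p ∈ P) (s : ι) :
    ∑ r ∈ Finset.range K, (uclamp r (bF P y p s) - uclamp r (aF P y p s)) = y p s := by
  rw [Finset.sum_sub_distrib,
    sum_uclamp K (le_trans (aF_nonneg hy p s) (aF_le_bF hy p s))
      (le_trans (bF_le_col hy p s) (hCK s)),
    sum_uclamp K (aF_nonneg hy p s)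
      (le_trans (le_trans (aF_le_bF hy p s) (bF_le_col hy p s)) (hCK s)),
    bF_eq hpP s]
  ring

/-- per-slot: summing the overlaps over all rows gives the clamped column mass. -/
lemma sum_ov_col (r : ℕ) (s : ι) :
    ∑ p ∈ P, (uclamp r (bF P y p s) - uclamp r (aF P y p s))
      = uclamp r (∑ q ∈ P, y q s) := by
  have := telescope_filter_sum (uclamp r) (fun q => y q s) P
  unfold aF bF
  rw [this]  -- might need shape adjust
  rw [uclamp_zero, sub_zero]


def itemSet (P : Finset ℝ) (k : ℝ → ℕ) : Finset (ℝ × ℕ) :=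
  P.biUnion fun p => (Finset.range (k p)).image fun i => (p, i)

lemma mem_itemSet {P : Finset ℝ} {k : ℝ → ℕ} {x : ℝ × ℕ} :
    x ∈ itemSet P k ↔ x.1 ∈ P ∧ x.2 < k x.1 := by
  simp only [itemSet, Finset.mem_biUnion, Finset.mem_image, Finset.mem_range]
  constructor
  · rintro ⟨p, hp, i, hik, rfl⟩; exact ⟨hp, hik⟩
  · rintro ⟨h1, h2⟩; exact ⟨x.1, h1, x.2, h2, rfl⟩

def slotSet (P : Finset ℝ) (y : ℝ → ι → ℝ) (K : ℕ) (p : ℝ) : Finset (ι × ℕ) :=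
  (Finset.univ ×ˢ Finset.range K).filter fun z =>
    0 < y p z.1 ∧ (z.2 : ℝ) < bF P y p z.1 ∧ aF P y p z.1 < z.2 + 1

lemma mem_slotSet {P : Finset ℝ} {y : ℝ → ι → ℝ} {K : ℕ} {p : ℝ} {z : ι × ℕ} :
    z ∈ slotSet P y K p ↔ z.2 < K ∧ 0 < y p z.1 ∧ (z.2 : ℝ) < bF P y p z.1 ∧
      aF P y p z.1 < z.2 + 1 := by
  simp only [slotSet, Finset.mem_filter, Finset.mem_product, Finset.mem_univ, true_and,
    Finset.mem_range]

end Defs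

lemma ov_nonneg {ι : Type*} [Fintype ι] {P : Finset ℝ} {y : ℝ → ι → ℝ}
    (hy : ∀ p ∈ P, ∀ s, 0 ≤ y p s) (q : ℝ) (s : ι) (r : ℕ) :
    0 ≤ uclamp r (bF P y q s) - uclamp r (aF P y q s) :=
  sub_nonneg.mpr (uclamp_mono r (aF_le_bF hy q s))

lemma bF_le_aF_of_lt {ι : Type*} [Fintype ι] {P : Finset ℝ} {y : ℝ → ι → ℝ}
    (hy : ∀ p ∈ P, ∀ s, 0 ≤ y p s) {p q : ℝ} (hqp : q < p) (s : ι) :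
    bF P y p s ≤ aF P y q s := by
  apply Finset.sum_le_sum_of_subset_of_nonneg
  · intro t ht
    simp only [Finset.mem_filter] at ht ⊢
    exact ⟨ht.1, lt_of_lt_of_le hqp ht.2⟩
  · intro t ht _
    exact hy t (Finset.mem_of_mem_filter t ht) s

end JobRounding


/-- Rounding the job-size assignment variables (Lenstra–Shmoys–Tardos
style): an integral assignment with the same totals per size, where each index `s`
receives at most one extra item, of size at most the largest fractionally assigned one. -/
theorem job_size_assignment_rounding {ι : Type*} [Fintype ι]
    (P : Finset ℝ) (hP : ∀ p ∈ P, 0 < p)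
    (y : ℝ → ι → ℝ) (hy : ∀ p ∈ P, ∀ s, 0 ≤ y p s)
    (hk : ∀ p ∈ P, ∃ n : ℕ, ∑ s, y p s = n) :
    ∃ yhat : ℝ → ι → ℕ,
      (∀ p ∈ P, ((∑ s, yhat p s : ℕ) : ℝ) = ∑ s, y p s) ∧
      (∀ s, ∑ p ∈ P, p * yhat p s ≤ ∑ p ∈ P, p * y p s +
        (insert (0 : ℝ) (P.filter fun p => 0 < y p s)).max'
          (Finset.insert_nonempty _ _)) := by
  classical
  set k : ℝ → ℕ := fun p => if h : ∃ n : ℕ, ∑ s, y p s = (n : ℝ) then h.choose else 0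
    with hkdef
  have hkk : ∀ p ∈ P, ∑ s, y p s = (k p : ℝ) := by
    intro p hp
    have h := hk p hp
    simp only [hkdef]
    rw [dif_pos h]
    exact h.choose_spec
  set K : ℕ := ∑ p ∈ P, k p with hKdef
  have hCK : ∀ s, ∑ q ∈ P, y q s ≤ (K : ℝ) := by
    intro s
    have hcast : (K : ℝ) = ∑ q ∈ P, (k q : ℝ) := by rw [hKdef]; push_cast; rfl
    rw [hcast]
    apply Finset.sum_le_sum
    intro q hq
    rw [← hkk q hq]
    exact Finset.single_le_sum (fun s' _ => hy q hq s') (Finset.mem_univ s)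
  -- the cardinality of the fibers of the item set
  have hfib : ∀ p ∈ P, ((itemSet P k).attach.filter fun x => x.1.1 = p).card = k p := by
    intro p hp
    rw [Finset.filter_attach (fun z : ℝ × ℕ => z.1 = p), Finset.card_map, Finset.card_attach]
    have hset : (itemSet P k).filter (fun z => z.1 = p)
        = (Finset.range (k p)).image (fun i => (p, i)) := by
      ext z
      simp only [Finset.mem_filter, mem_itemSet, Finset.mem_image, Finset.mem_range]
      constructor
      · rintro ⟨⟨h1, h2⟩, h3⟩
        refine ⟨z.2, h3 ▸ h2, ?_⟩
        rw [← h3]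
      · rintro ⟨i, hi, rfl⟩
        exact ⟨⟨hp, hi⟩, rfl⟩
    rw [hset, Finset.card_image_of_injective _ (fun i j hij => by
      simpa using hij), Finset.card_range]
  -- Hall's condition
  have hHall : ∀ A : Finset {x : ℝ × ℕ // x ∈ itemSet P k},
      A.card ≤ (A.biUnion (fun x => slotSet P y K x.1.1)).card := by
    intro A
    set Q := A.image (fun x => x.1.1) with hQ
    have hQP : Q ⊆ P := by
      intro p hp
      obtain ⟨x, hx, rfl⟩ := Finset.mem_image.mp hp
      exact (mem_itemSet.mp x.2).1
    set N := A.biUnion (fun x => slotSet P y K x.1.1) with hN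
    have h1 : A.card ≤ ∑ p ∈ Q, k p := by
      rw [Finset.card_eq_sum_card_fiberwise
        (f := fun x : {x : ℝ × ℕ // x ∈ itemSet P k} => x.1.1) (t := Q)
        (fun x hx => Finset.mem_image_of_mem _ hx)]
      apply Finset.sum_le_sum
      intro p hp
      calc (A.filter fun x => x.1.1 = p).card
          ≤ ((itemSet P k).attach.filter fun x => x.1.1 = p).card := by
            apply Finset.card_le_card
            intro x hx
            exact Finset.mem_filter.mpr ⟨Finset.mem_attach _ _, (Finset.mem_filter.mp hx).2⟩
        _ = k p := hfib p (hQP hp)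
    have h2 : (∑ p ∈ Q, (k p : ℝ)) ≤ (N.card : ℝ) := by
      calc ∑ p ∈ Q, (k p : ℝ) = ∑ p ∈ Q, ∑ s : ι, y p s :=
            Finset.sum_congr rfl (fun p hp => (hkk p (hQP hp)).symm)
        _ = ∑ p ∈ Q, ∑ s : ι, ∑ r ∈ Finset.range K,
              (uclamp r (bF P y p s) - uclamp r (aF P y p s)) := by
            refine Finset.sum_congr rfl (fun p hp => Finset.sum_congr rfl (fun s _ => ?_))
            exact (sum_ov_row hy hCK (hQP hp) s).symm
        _ = ∑ s : ι, ∑ r ∈ Finset.range K, ∑ p ∈ Q,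
              (uclamp r (bF P y p s) - uclamp r (aF P y p s)) := by
            rw [Finset.sum_comm]
            exact Finset.sum_congr rfl (fun s _ => Finset.sum_comm)
        _ ≤ ∑ s : ι, ∑ r ∈ Finset.range K, (if (s, r) ∈ N then (1 : ℝ) else 0) := by
            refine Finset.sum_le_sum (fun s _ => Finset.sum_le_sum (fun r hr => ?_))
            by_cases hsr : (s, r) ∈ N
            · rw [if_pos hsr]
              calc ∑ p ∈ Q, (uclamp r (bF P y p s) - uclamp r (aF P y p s))
                  ≤ ∑ p ∈ P, (uclamp r (bF P y p s) - uclamp r (aF P y p s)) :=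
                    Finset.sum_le_sum_of_subset_of_nonneg hQP
                      (fun q hq _ => ov_nonneg hy q s r)
                _ = uclamp r (∑ q ∈ P, y q s) := sum_ov_col r s
                _ ≤ 1 := uclamp_le_one _ _
            · rw [if_neg hsr]
              refine le_of_eq (Finset.sum_eq_zero (fun p hp => ?_))
              by_contra hne
              have hov : 0 < uclamp r (bF P y p s) - uclamp r (aF P y p s) :=
                lt_of_le_of_ne (ov_nonneg hy p s r) (Ne.symm hne)
              obtain ⟨hab, hrb, har⟩ :=
                ov_pos_conds (aF_le_bF hy p s) (aF_nonneg hy p s) hov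
              obtain ⟨x, hxA, hx1⟩ := Finset.mem_image.mp hp
              apply hsr
              rw [hN]
              refine Finset.mem_biUnion.mpr ⟨x, hxA, ?_⟩
              rw [mem_slotSet, hx1]
              have hypos : 0 < y p s := by
                have := bF_eq (P := P) (y := y) (hQP hp) s
                linarith
              exact ⟨Finset.mem_range.mp hr, hypos, hrb, har⟩
        _ = (((Finset.univ ×ˢ Finset.range K).filter (fun z : ι × ℕ => z ∈ N)).card : ℝ) := by
            rw [← Finset.sum_product']
            rw [← Finset.sum_boole]
        _ ≤ (N.card : ℝ) := by
            have : ((Finset.univ ×ˢ Finset.range K).filter (fun z : ι × ℕ => z ∈ N)) ⊆ N := by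
              intro z hz
              exact (Finset.mem_filter.mp hz).2
            exact_mod_cast Finset.card_le_card this
    have hfinal : (A.card : ℝ) ≤ (N.card : ℝ) := by
      refine le_trans ?_ h2
      exact_mod_cast h1
    exact_mod_cast hfinal
  obtain ⟨f, hfinj, hfmem⟩ :=
    (Finset.all_card_le_biUnion_card_iff_exists_injective
      (fun x : {x : ℝ × ℕ // x ∈ itemSet P k} => slotSet P y K x.1.1)).mp hHall
  refine ⟨fun p s => ((itemSet P k).attach.filter
      fun x => x.1.1 = p ∧ (f x).1 = s).card, ?_, ?_⟩
  · -- row sums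
    intro p hp
    rw [hkk p hp]
    congr 1
    show (∑ s : ι, ((itemSet P k).attach.filter
      fun x => x.1.1 = p ∧ (f x).1 = s).card) = k p
    have hmaps : ∀ x ∈ (itemSet P k).attach.filter fun x => x.1.1 = p,
        (f x).1 ∈ (Finset.univ : Finset ι) := fun x _ => Finset.mem_univ _
    have := Finset.card_eq_sum_card_fiberwise hmaps
    rw [hfib p hp] at this
    rw [this]
    apply Finset.sum_congr rfl
    intro s _
    rw [Finset.filter_filter]
  · -- column bound
    intro s
    set M := (insert (0 : ℝ) (P.filter fun p => 0 < y p s)).max'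
      (Finset.insert_nonempty _ _) with hM
    have hM0 : (0 : ℝ) ≤ M := by
      rw [hM]
      exact Finset.le_max' _ 0 (Finset.mem_insert_self _ _)
    have hMp : ∀ p ∈ P, 0 < y p s → p ≤ M := by
      intro p hp hyp
      rw [hM]
      apply Finset.le_max'
      apply Finset.mem_insert_of_mem
      rw [Finset.mem_filter]
      exact ⟨hp, hyp⟩
    set Xs := (itemSet P k).attach.filter (fun x => (f x).1 = s) with hXs
    -- facts about members of Xs
    have hx_mem : ∀ x ∈ Xs, (x.1.1 ∈ P ∧ 0 < y x.1.1 s ∧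
        ((f x).2 : ℝ) < bF P y x.1.1 s ∧
        aF P y x.1.1 s < (f x).2 + 1 ∧ (f x).2 < K) := by
      intro x hx
      have hfx1 : (f x).1 = s := (Finset.mem_filter.mp hx).2
      have hslot := mem_slotSet.mp (hfmem x)
      rw [hfx1] at hslot
      exact ⟨(mem_itemSet.mp x.2).1, hslot.2.1, hslot.2.2.1, hslot.2.2.2, hslot.1⟩
    -- rewrite the LHS as a sum over Xs
    have hLHS : ∑ p ∈ P, p * (((itemSet P k).attach.filter
          fun x => x.1.1 = p ∧ (f x).1 = s).card : ℝ)
        = ∑ x ∈ Xs, (x.1.1 : ℝ) := by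
      rw [← Finset.sum_fiberwise_of_maps_to
        (g := fun x : {x : ℝ × ℕ // x ∈ itemSet P k} => x.1.1) (t := P)
        (fun x hx => (hx_mem x hx).1)]
      apply Finset.sum_congr rfl
      intro p _
      have hff : Xs.filter (fun x => x.1.1 = p)
          = (itemSet P k).attach.filter fun x => x.1.1 = p ∧ (f x).1 = s := by
        rw [hXs, Finset.filter_filter]
        apply Finset.filter_congr
        intro x _
        constructor
        · rintro ⟨h1, h2⟩; exact ⟨h2, h1⟩
        · rintro ⟨h1, h2⟩; exact ⟨h2, h1⟩
      rw [← hff]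
      rw [Finset.sum_congr rfl (fun x hx => (Finset.mem_filter.mp hx).2 : ∀ x ∈ Xs.filter (fun x => x.1.1 = p), (x.1.1 : ℝ) = p)]
      rw [Finset.sum_const, nsmul_eq_mul, mul_comm]
    rw [hLHS]
    -- split Xs by slot zero / nonzero
    rw [← Finset.sum_filter_add_sum_filter_not Xs (fun x => (f x).2 = 0)]
    have hX0 : ∑ x ∈ Xs.filter (fun x => (f x).2 = 0), (x.1.1 : ℝ) ≤ M := by
      have hcard : (Xs.filter (fun x => (f x).2 = 0)).card ≤ 1 := by
        rw [Finset.card_le_one]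
        intro x hx x' hx'
        apply hfinj
        have e1 : f x = (s, 0) := Prod.ext_iff.mpr
          ⟨(Finset.mem_filter.mp (Finset.mem_of_mem_filter x hx)).2,
            (Finset.mem_filter.mp hx).2⟩
        have e2 : f x' = (s, 0) := Prod.ext_iff.mpr
          ⟨(Finset.mem_filter.mp (Finset.mem_of_mem_filter x' hx')).2,
            (Finset.mem_filter.mp hx').2⟩
        rw [e1, e2]
      calc ∑ x ∈ Xs.filter (fun x => (f x).2 = 0), (x.1.1 : ℝ)
          ≤ (Xs.filter (fun x => (f x).2 = 0)).card • M := by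
            apply Finset.sum_le_card_nsmul
            intro x hx
            have h := hx_mem x (Finset.mem_of_mem_filter x hx)
            exact hMp _ h.1 h.2.1
        _ ≤ M := by
            rw [nsmul_eq_mul]
            calc ((Xs.filter (fun x => (f x).2 = 0)).card : ℝ) * M ≤ 1 * M := by
                  apply mul_le_mul_of_nonneg_right _ hM0
                  exact_mod_cast hcard
              _ = M := one_mul M
    have hX1 : ∑ x ∈ Xs.filter (fun x => ¬ (f x).2 = 0), (x.1.1 : ℝ)
        ≤ ∑ p ∈ P, p * y p s := by
      set X1 := Xs.filter (fun x => ¬ (f x).2 = 0) with hX1def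
      have hitem : ∀ x ∈ X1, (x.1.1 : ℝ) ≤ ∑ q ∈ P,
          q * (uclamp ((f x).2 - 1) (bF P y q s) - uclamp ((f x).2 - 1) (aF P y q s)) := by
        intro x hx
        have hne : (f x).2 ≠ 0 := (Finset.mem_filter.mp hx).2
        have hmem := hx_mem x (Finset.mem_of_mem_filter x hx)
        obtain ⟨hpP, hypos, hrb, har, hrK⟩ := hmem
        set p := x.1.1 with hp
        obtain ⟨j, hj⟩ : ∃ j, (f x).2 = j + 1 :=
          ⟨(f x).2 - 1, (Nat.succ_pred_eq_of_pos (Nat.pos_of_ne_zero hne)).symm⟩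
        have hrj : (f x).2 - 1 = j := by omega
        rw [hrj]
        have hbj : (j : ℝ) + 1 < bF P y p s := by
          rw [hj] at hrb
          push_cast at hrb
          linarith
        have hfull : ∑ q ∈ P, (uclamp j (bF P y q s) - uclamp j (aF P y q s)) = 1 := by
          rw [sum_ov_col j s]
          apply uclamp_of_ge
          have := bF_le_col hy p s
          linarith
        have hqge : ∀ q ∈ P, p * (uclamp j (bF P y q s) - uclamp j (aF P y q s))
            ≤ q * (uclamp j (bF P y q s) - uclamp j (aF P y q s)) := by
          intro q hq
          rcases eq_or_lt_of_le (ov_nonneg hy q s j) with heq | hlt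
          · rw [← heq, mul_zero, mul_zero]
          · have hc := ov_pos_conds (aF_le_bF hy q s) (aF_nonneg hy q s) hlt
            have hpq : p ≤ q := by
              by_contra hcon
              push_neg at hcon
              have hsub := bF_le_aF_of_lt hy hcon s
              have := hc.2.2
              linarith
            exact mul_le_mul_of_nonneg_right hpq hlt.le
        calc (p : ℝ) = p * 1 := (mul_one p).symm
          _ = p * ∑ q ∈ P, (uclamp j (bF P y q s) - uclamp j (aF P y q s)) := by rw [hfull]
          _ = ∑ q ∈ P, p * (uclamp j (bF P y q s) - uclamp j (aF P y q s)) :=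
              Finset.mul_sum _ _ _
          _ ≤ ∑ q ∈ P, q * (uclamp j (bF P y q s) - uclamp j (aF P y q s)) :=
              Finset.sum_le_sum hqge
      have hginj : ∀ x ∈ X1, ∀ x' ∈ X1, (f x).2 - 1 = (f x').2 - 1 → x = x' := by
        intro x hx x' hx'
        intro hg
        have hne : (f x).2 ≠ 0 := (Finset.mem_filter.mp hx).2
        have hne' : (f x').2 ≠ 0 := (Finset.mem_filter.mp hx').2
        have h2 : (f x).2 = (f x').2 := by omega
        have h1 : (f x).1 = (f x').1 := by
          rw [(Finset.mem_filter.mp (Finset.mem_of_mem_filter x hx)).2,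
            (Finset.mem_filter.mp (Finset.mem_of_mem_filter x' hx')).2]
        exact hfinj (Prod.ext_iff.mpr ⟨h1, h2⟩)
      calc ∑ x ∈ X1, (x.1.1 : ℝ)
          ≤ ∑ x ∈ X1, ∑ q ∈ P, q * (uclamp ((f x).2 - 1) (bF P y q s)
              - uclamp ((f x).2 - 1) (aF P y q s)) := Finset.sum_le_sum hitem
        _ = ∑ j ∈ X1.image (fun x => (f x).2 - 1), ∑ q ∈ P,
              q * (uclamp j (bF P y q s) - uclamp j (aF P y q s)) :=
            (Finset.sum_image (f := fun j => ∑ q ∈ P,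
              q * (uclamp j (bF P y q s) - uclamp j (aF P y q s))) hginj).symm
        _ ≤ ∑ j ∈ Finset.range K, ∑ q ∈ P,
              q * (uclamp j (bF P y q s) - uclamp j (aF P y q s)) := by
            apply Finset.sum_le_sum_of_subset_of_nonneg
            · intro j hj
              obtain ⟨x, hx, rfl⟩ := Finset.mem_image.mp hj
              have := (hx_mem x (Finset.mem_of_mem_filter x hx)).2.2.2.2
              exact Finset.mem_range.mpr (by omega)
            · intro j _ _
              apply Finset.sum_nonneg
              intro q hq
              exact mul_nonneg (hP q hq).le (ov_nonneg hy q s j)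
        _ = ∑ q ∈ P, q * y q s := by
            rw [Finset.sum_comm]
            apply Finset.sum_congr rfl
            intro q hq
            rw [← Finset.mul_sum, sum_ov_row hy hCK hq s]
    linarith
end

section
/- Fix 0 < ε ≤ 1, an integer D ≥ 1, T > 0, and θ = (ε²/D)^D. For an instance of D-dimensional vector scheduling with machine types whose processing time vectors p_{t,j} ∈ ℝ^D have all coordinates strictly positive, define p̄^{(d)}_{t,j} = θT·(1+ε)^{⌈log_{1+ε}(p^{(d)}_{t,j}/(θT))⌉} and p̃^{(d)}_{t,j} = max{ p̄^{(d)}_{t,j}, (ε/D)·max_{d'∈[D]} p̄^{(d')}_{t,j} }. Then: (i) every schedule with makespan at most T with respect to p has makespan at most (1+ε)²·T with respect to p̃; and (ii) for every schedule, the makespan with respect to p is at most the makespan with respect to p̃. -/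
open Finset
open scoped Classical

lemma round_bounds {b c y : ℝ} (hb : 1 < b) (hc : 0 < c) (hy : 0 < y) :
    y ≤ c * b ^ ⌈Real.logb b (y / c)⌉ ∧ c * b ^ ⌈Real.logb b (y / c)⌉ ≤ b * y := by
  have hb0 : 0 < b := lt_trans one_pos hb
  set x := Real.logb b (y / c) with hx
  have hrx : b ^ x = y / c := Real.rpow_logb hb0 (ne_of_gt hb) (div_pos hy hc)
  have hz : (b : ℝ) ^ (⌈x⌉ : ℤ) = b ^ ((⌈x⌉ : ℤ) : ℝ) := (Real.rpow_intCast b _).symm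
  constructor
  · have h1 : b ^ (x : ℝ) ≤ b ^ ((⌈x⌉ : ℤ) : ℝ) :=
      Real.rpow_le_rpow_of_exponent_le (le_of_lt hb) (Int.le_ceil x)
    rw [hz]
    calc y = c * (y / c) := by field_simp
    _ ≤ c * b ^ (((⌈x⌉ : ℤ) : ℝ)) := by
        rw [← hrx]; exact mul_le_mul_of_nonneg_left h1 hc.le
  · have h1 : b ^ (((⌈x⌉ : ℤ) : ℝ)) ≤ b ^ (x + 1) :=
      Real.rpow_le_rpow_of_exponent_le (le_of_lt hb) (le_of_lt (Int.ceil_lt_add_one x))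
    rw [hz]
    calc c * b ^ (((⌈x⌉ : ℤ):ℝ)) ≤ c * b ^ (x + 1) := mul_le_mul_of_nonneg_left h1 hc.le
    _ = b * y := by
        rw [Real.rpow_add hb0, hrx, Real.rpow_one]
        field_simp

/-- The two rounding steps for vector scheduling (geometric rounding
with threshold `θT`, `θ = (ε²/D)^D`, followed by lifting every coordinate to at least
`ε/D` times the largest coordinate) increase the makespan from `T` to at most `(1+ε)²T`,
and makespans never decrease under the rounding. -/
theorem vector_scheduling_rounding {J M : Type*} [Fintype J] [Fintype M]
    {K : ℕ} (D : ℕ) (hD : 1 ≤ D) (mt : M → Fin K)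
    (ε T : ℝ) (hε : 0 < ε) (hε1 : ε ≤ 1) (hT : 0 < T)
    (p : Fin K → J → Fin D → ℝ) (hp : ∀ t j d, 0 < p t j d)
    (pbar ptil : Fin K → J → Fin D → ℝ)
    (hpbar : ∀ t j d, pbar t j d = (ε ^ 2 / D) ^ D * T *
      (1 + ε) ^ ⌈Real.logb (1 + ε) (p t j d / ((ε ^ 2 / D) ^ D * T))⌉)
    (hptil : ∀ t j d, ptil t j d =
      max (pbar t j d) (ε / D * ⨆ d', pbar t j d')) :
    (∀ σ : J → M,
      (⨆ i, ⨆ d, ∑ j ∈ univ.filter (fun j => σ j = i), p (mt i) j d) ≤ T →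
      (⨆ i, ⨆ d, ∑ j ∈ univ.filter (fun j => σ j = i), ptil (mt i) j d) ≤
        (1 + ε) ^ 2 * T) ∧
    (∀ σ : J → M,
      (⨆ i, ⨆ d, ∑ j ∈ univ.filter (fun j => σ j = i), p (mt i) j d) ≤
        ⨆ i, ⨆ d, ∑ j ∈ univ.filter (fun j => σ j = i), ptil (mt i) j d) := by
  have hDpos : (0:ℝ) < (D:ℝ) := by exact_mod_cast Nat.lt_of_lt_of_le Nat.zero_lt_one hD
  have hb : (1:ℝ) < 1 + ε := by linarith
  have hc : 0 < (ε ^ 2 / D) ^ D * T := by positivity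
  -- bounds on pbar
  have hlow : ∀ t j d, p t j d ≤ pbar t j d := by
    intro t j d
    rw [hpbar]
    exact (round_bounds hb hc (hp t j d)).1
  have hhigh : ∀ t j d, pbar t j d ≤ (1 + ε) * p t j d := by
    intro t j d
    rw [hpbar]
    exact (round_bounds hb hc (hp t j d)).2
  have hpbar_pos : ∀ t j d, 0 < pbar t j d := fun t j d => lt_of_lt_of_le (hp t j d) (hlow t j d)
  haveI : Nonempty (Fin D) := ⟨⟨0, Nat.lt_of_lt_of_le Nat.zero_lt_one hD⟩⟩
  -- sup of pbar over dimensions is bounded by sum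
  have hsup_le_sum : ∀ t j, (⨆ d', pbar t j d') ≤ ∑ d', pbar t j d' := by
    intro t j
    refine ciSup_le fun d => ?_
    exact Finset.single_le_sum (fun d' _ => (hpbar_pos t j d').le) (mem_univ d)
  have hsup_nonneg : ∀ t j, 0 ≤ ⨆ d', pbar t j d' := by
    intro t j
    exact le_trans (hpbar_pos t j (Classical.arbitrary (Fin D))).le
      (le_ciSup (Set.Finite.bddAbove (Set.finite_range _)) _)
  have hptil_le : ∀ t j d, ptil t j d ≤ pbar t j d + ε / D * ∑ d', pbar t j d' := by
    intro t j d
    rw [hptil]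
    refine max_le ?_ ?_
    · have : 0 ≤ ε / D * ∑ d', pbar t j d' := by
        refine mul_nonneg (by positivity) (Finset.sum_nonneg fun d' _ => (hpbar_pos t j d').le)
      linarith
    · have h1 : ε / D * (⨆ d', pbar t j d') ≤ ε / D * ∑ d', pbar t j d' :=
        mul_le_mul_of_nonneg_left (hsup_le_sum t j) (by positivity)
      have h2 : 0 ≤ pbar t j d := (hpbar_pos t j d).le
      linarith
  have hp_le_ptil : ∀ t j d, p t j d ≤ ptil t j d := by
    intro t j d
    rw [hptil]
    exact le_trans (hlow t j d) (le_max_left _ _)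
  constructor
  · intro σ hσ
    -- each dimension load bound
    have hS : ∀ i d, ∑ j ∈ univ.filter (fun j => σ j = i), p (mt i) j d ≤ T := by
      intro i d
      have h1 : ∑ j ∈ univ.filter (fun j => σ j = i), p (mt i) j d ≤
          ⨆ d, ∑ j ∈ univ.filter (fun j => σ j = i), p (mt i) j d :=
        le_ciSup (f := fun d => ∑ j ∈ univ.filter (fun j => σ j = i), p (mt i) j d)
          (Set.Finite.bddAbove (Set.finite_range _)) d
      have h2 : (⨆ d, ∑ j ∈ univ.filter (fun j => σ j = i), p (mt i) j d) ≤
          ⨆ i, ⨆ d, ∑ j ∈ univ.filter (fun j => σ j = i), p (mt i) j d :=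
        le_ciSup (f := fun i => ⨆ d, ∑ j ∈ univ.filter (fun j => σ j = i), p (mt i) j d)
          (Set.Finite.bddAbove (Set.finite_range _)) i
      exact le_trans h1 (le_trans h2 hσ)
    have hSbar : ∀ i d, ∑ j ∈ univ.filter (fun j => σ j = i), pbar (mt i) j d ≤ (1 + ε) * T := by
      intro i d
      calc ∑ j ∈ univ.filter (fun j => σ j = i), pbar (mt i) j d
          ≤ ∑ j ∈ univ.filter (fun j => σ j = i), (1 + ε) * p (mt i) j d :=
            Finset.sum_le_sum fun j _ => hhigh (mt i) j d
        _ = (1 + ε) * ∑ j ∈ univ.filter (fun j => σ j = i), p (mt i) j d := by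
            rw [Finset.mul_sum]
        _ ≤ (1 + ε) * T := mul_le_mul_of_nonneg_left (hS i d) (by linarith)
    rcases isEmpty_or_nonempty M with hM | hM
    · rw [Real.iSup_of_isEmpty]
      positivity
    · refine ciSup_le fun i => ciSup_le fun d => ?_
      calc ∑ j ∈ univ.filter (fun j => σ j = i), ptil (mt i) j d
          ≤ ∑ j ∈ univ.filter (fun j => σ j = i),
              (pbar (mt i) j d + ε / D * ∑ d', pbar (mt i) j d') :=
            Finset.sum_le_sum fun j _ => hptil_le (mt i) j d
        _ = (∑ j ∈ univ.filter (fun j => σ j = i), pbar (mt i) j d) +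
              ε / D * ∑ d', ∑ j ∈ univ.filter (fun j => σ j = i), pbar (mt i) j d' := by
            rw [Finset.sum_add_distrib, ← Finset.mul_sum, Finset.sum_comm]
        _ ≤ (1 + ε) * T + ε / D * (D * ((1 + ε) * T)) := by
            refine add_le_add (hSbar i d) (mul_le_mul_of_nonneg_left ?_ (by positivity))
            calc ∑ d' : Fin D, ∑ j ∈ univ.filter (fun j => σ j = i), pbar (mt i) j d'
                ≤ ∑ _d' : Fin D, (1 + ε) * T := Finset.sum_le_sum fun d' _ => hSbar i d'
              _ = D * ((1 + ε) * T) := by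
                  rw [Finset.sum_const, Finset.card_univ, Fintype.card_fin, nsmul_eq_mul]
        _ = (1 + ε) ^ 2 * T := by field_simp
  · intro σ
    rcases isEmpty_or_nonempty M with hM | hM
    · rw [Real.iSup_of_isEmpty, Real.iSup_of_isEmpty]
    · refine ciSup_le fun i => ciSup_le fun d => ?_
      refine le_trans ?_ (le_ciSup (f := fun i => ⨆ d, ∑ j ∈ univ.filter (fun j => σ j = i), ptil (mt i) j d)
        (Set.Finite.bddAbove (Set.finite_range _)) i)
      refine le_trans ?_ (le_ciSup (f := fun d => ∑ j ∈ univ.filter (fun j => σ j = i), ptil (mt i) j d)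
        (Set.Finite.bddAbove (Set.finite_range _)) d)
      exact Finset.sum_le_sum fun j _ => hp_le_ptil (mt i) j d
end

section
/- Let 0 < ε ≤ 1, let D ≥ 2 be an integer, let c > 0 and q > 0 be reals, and fix d ∈ {1,…,D}. Consider the set of vectors p ∈ ℝ^D such that every coordinate of p has the form c·(1+ε)^x for some integer x, p^{(d)} = q, and every coordinate p^{(d'')} satisfies p^{(d'')} ≥ (ε/D)·max_{d'} p^{(d')}. Then the cardinality of this set is at most (2·⌈log_{1+ε}(D/ε)⌉ + 1)^{D−1}. -/
/-- The set of grid vectors sharing the value `q` in dimension `d`: every coordinate lies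
on the geometric grid `{c·(1+ε)^x : x ∈ ℤ}` and is at least `ε/D` times the largest
coordinate. -/
def gridVecs (ε c q : ℝ) (D : ℕ) (d : Fin D) : Set (Fin D → ℝ) :=
  {p | (∀ d'' : Fin D, ∃ x : ℤ, p d'' = c * (1 + ε) ^ x) ∧ p d = q ∧
    ∀ d'' : Fin D, ε / D * (⨆ d' : Fin D, p d') ≤ p d''}

/-! Two coordinates `c(1+ε)^z` and `c(1+ε)^w` of a vector in `gridVecs` are both at least
`ε/D` times the maximum, so their ratio is at most `D/ε` and `|z - w| ≤ L := ⌈log_{1+ε}(D/ε)⌉`.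
Hence the exponent vector is pinned at `d` to the exponent of `q` and lies within `L` of it
elsewhere: at most `(2L+1)^{D-1}` choices. -/

open Finset

theorem Fintype.card_piFinset_update_singleton {ι α : Type*} [Fintype ι] [DecidableEq ι]
    (s : Finset α) (i : ι) (x : α) :
    #(Fintype.piFinset (Function.update (fun _ => s) i {x})) = #s ^ (Fintype.card ι - 1) := by
  have hcard : (fun j => #(Function.update (fun _ => s) i {x} j)) =
      Function.update (fun _ => #s) i 1 := by
    ext j
    rcases eq_or_ne j i with rfl | h <;> simp [*]
  rw [Fintype.card_piFinset, hcard, prod_update_of_mem (mem_univ i), prod_const, one_mul,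
    card_sdiff_of_subset (by simp), card_singleton, card_univ]

theorem sub_le_ceil_logb_inv_of_mul_zpow_le {b a : ℝ} (hb : 1 < b) (ha : 0 < a) {z w : ℤ}
    (h : a * b ^ z ≤ b ^ w) : z - w ≤ ⌈Real.logb b a⁻¹⌉ := by
  have hb0 : 0 < b := zero_lt_one.trans hb
  have hzw : b ^ (z - w) ≤ a⁻¹ := by
    rw [zpow_sub₀ hb0.ne', div_le_iff₀ (zpow_pos hb0 w), ← div_eq_inv_mul, le_div_iff₀ ha, mul_comm]
    exact h
  have : ((z - w : ℤ) : ℝ) ≤ Real.logb b a⁻¹ := by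
    rwa [Real.le_logb_iff_rpow_le hb (inv_pos.mpr ha), Real.rpow_intCast]
  exact_mod_cast this.trans (Int.le_ceil _)

theorem mul_le_of_forall_mul_iSup_le {ι : Type*} [Finite ι] {p : ι → ℝ} {a : ℝ} (ha : 0 ≤ a)
    (h : ∀ i, a * ⨆ j, p j ≤ p i) (i j : ι) : a * p i ≤ p j :=
  (mul_le_mul_of_nonneg_left (le_ciSup (Set.finite_range p).bddAbove i) ha).trans (h j)

theorem gridVecs_subset_image {ε c q : ℝ} {D : ℕ} {d : Fin D} (hε : 0 < ε) (hc : 0 < c)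
    {x₀ : ℤ} (hq : q = c * (1 + ε) ^ x₀) :
    gridVecs ε c q D d ⊆ (fun g : Fin D → ℤ => fun i => c * (1 + ε) ^ g i) ''
      Fintype.piFinset (Function.update
        (fun _ => Icc (x₀ - ⌈Real.logb (1 + ε) (D / ε)⌉) (x₀ + ⌈Real.logb (1 + ε) (D / ε)⌉))
        d {x₀}) := by
  rintro p ⟨hgrid, hpd, hbound⟩
  choose g hg using hgrid
  refine ⟨g, ?_, funext fun i => (hg i).symm⟩
  have hb : 1 < 1 + ε := lt_add_of_pos_right 1 hε
  have ha : 0 < ε / D := div_pos hε (Nat.cast_pos.mpr d.pos)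
  have hspread (i j : Fin D) : g i - g j ≤ ⌈Real.logb (1 + ε) (D / ε)⌉ := by
    have h := mul_le_of_forall_mul_iSup_le ha.le hbound i j
    rw [hg i, hg j, mul_left_comm] at h
    simpa only [inv_div] using
      sub_le_ceil_logb_inv_of_mul_zpow_le hb ha (le_of_mul_le_mul_left h hc)
  have hgd : g d = x₀ := by
    refine zpow_right_injective₀ (zero_lt_one.trans hb) hb.ne' (mul_left_cancel₀ hc.ne' ?_)
    rw [← hg d, hpd, hq]
  refine Fintype.mem_piFinset.mpr fun i => ?_
  rcases eq_or_ne i d with rfl | hi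
  · simp [hgd]
  · rw [Function.update_of_ne hi, mem_Icc]
    constructor <;> linarith [hspread i d, hspread d i]

theorem grid_vector_count_general (ε : ℝ) (hε : 0 < ε) (hε1 : ε ≤ 1) (D : ℕ) (hD : 2 ≤ D)
    (c q : ℝ) (hc : 0 < c) (d : Fin D) :
    (gridVecs ε c q D d).Finite ∧
    (((gridVecs ε c q D d).ncard : ℤ) ≤
      (2 * ⌈Real.logb (1 + ε) (D / ε)⌉ + 1) ^ (D - 1)) := by
  set L := ⌈Real.logb (1 + ε) (D / ε)⌉
  have hL : 0 ≤ L := by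
    refine Int.ceil_nonneg (Real.logb_nonneg (by linarith) ?_)
    rw [one_le_div hε]
    exact hε1.trans (by exact_mod_cast (one_le_two.trans hD))
  rcases (gridVecs ε c q D d).eq_empty_or_nonempty with h | ⟨p₀, hp₀⟩
  · rw [h]
    exact ⟨Set.finite_empty, by simp only [Set.ncard_empty]; positivity⟩
  obtain ⟨x₀, hx₀⟩ := hp₀.1 d
  rw [hp₀.2.1] at hx₀
  have hsub := gridVecs_subset_image (d := d) hε hc hx₀
  rw [← coe_image] at hsub
  refine ⟨(finite_toSet _).subset hsub, ?_⟩
  calc ((gridVecs ε c q D d).ncard : ℤ)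
      ≤ #(Fintype.piFinset (Function.update (fun _ => Icc (x₀ - L) (x₀ + L)) d {x₀})) := by
        exact_mod_cast (Set.ncard_le_ncard hsub (finite_toSet _)).trans
          ((Set.ncard_coe_finset _).trans_le card_image_le)
    _ = (2 * L + 1) ^ (D - 1) := by
        rw [Fintype.card_piFinset_update_singleton, Int.card_Icc, Fintype.card_fin, Nat.cast_pow,
          Int.toNat_of_nonneg (by omega)]
        ring

/-- There are at most `(2⌈log_{1+ε}(D/ε)⌉ + 1)^{D-1}` rounded
processing-time vectors sharing a fixed value `q` in a fixed dimension `d`. -/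
theorem grid_vector_count (ε : ℝ) (hε : 0 < ε) (hε1 : ε ≤ 1) (D : ℕ) (hD : 2 ≤ D)
    (c q : ℝ) (hc : 0 < c) (hq : 0 < q) (d : Fin D) :
    (gridVecs ε c q D d).Finite ∧
    (((gridVecs ε c q D d).ncard : ℤ) ≤
      (2 * ⌈Real.logb (1 + ε) (D / ε)⌉ + 1) ^ (D - 1)) :=
  grid_vector_count_general ε hε hε1 D hD c q hc d
end
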